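/- arXiv:1801.09127 — 2 statements merged into one kernel-verified Lean document; each statement's English description precedes it below -/
import Mathlib

section
/- Let 0 → A → B → C → 0 be a short exact sequence of left R-modules. If any two of A, B, C have finite X-Gorenstein projective dimension, then so does the third. -/
open CategoryTheory DirectSum

universe u

/-- An `𝒳`-complete projective resolution: a doubly infinite exact sequence of
projective `R`-modules that remains exact after applying `Hom_R(-, Y)`
for every `Y` in the class `𝒳`. -/
structure XCompleteResolution (R : Type u) [Ring R] (𝒳 : ModuleCat.{u} R → Prop) where
  P : ℤ → ModuleCat.{u} R
  d : ∀ n : ℤ, P n →ₗ[R] P (n + 1)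
  projective : ∀ n, Module.Projective R (P n)
  exact : ∀ n, Function.Exact (d n) (d (n + 1))
  homExact : ∀ (Y : ModuleCat.{u} R), 𝒳 Y → ∀ n : ℤ,
    Function.Exact (fun f : P (n + 1 + 1) →ₗ[R] Y => f ∘ₗ d (n + 1))
      (fun f : P (n + 1) →ₗ[R] Y => f ∘ₗ d n)

/-- `G` is `𝒳`-Gorenstein projective: it is a kernel in an `𝒳`-complete
projective resolution. -/
def XGorensteinProjective (R : Type u) [Ring R] (𝒳 : ModuleCat.{u} R → Prop)
    (G : ModuleCat.{u} R) : Prop :=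
  ∃ C : XCompleteResolution R 𝒳, Nonempty (G ≃ₗ[R] LinearMap.ker (C.d 0))

/-- `ResWithKernel R 𝒞 n K M` says that there is an exact sequence
`0 → K → G_{n-1} → ⋯ → G_0 → M → 0` in which every `G_i` belongs to the class `𝒞`. -/
def ResWithKernel (R : Type u) [Ring R] (𝒞 : ModuleCat.{u} R → Prop) :
    ℕ → ModuleCat.{u} R → ModuleCat.{u} R → Prop
  | 0, K, M => Nonempty (K ≃ₗ[R] M)
  | n + 1, K, M => ∃ (G L : ModuleCat.{u} R) (f : L →ₗ[R] G) (g : G →ₗ[R] M),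
      𝒞 G ∧ Function.Injective f ∧ Function.Surjective g ∧ Function.Exact f g ∧
      ResWithKernel R 𝒞 n K L

/-- The resolution dimension of `M` with respect to a class `𝒞` of modules:
the least length of a resolution of `M` by modules in `𝒞` (`⊤` if none exists). -/
noncomputable def relDim (R : Type u) [Ring R] (𝒞 : ModuleCat.{u} R → Prop)
    (M : ModuleCat.{u} R) : ℕ∞ :=
  sInf {n : ℕ∞ | ∃ m : ℕ, n = m ∧ ∃ K, 𝒞 K ∧ ResWithKernel R 𝒞 m K M}

/-- The `𝒳`-Gorenstein projective dimension of `M`. -/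
noncomputable def xGpd (R : Type u) [Ring R] (𝒳 : ModuleCat.{u} R → Prop)
    (M : ModuleCat.{u} R) : ℕ∞ :=
  relDim R (XGorensteinProjective R 𝒳) M

/-- The projective dimension of `M`. -/
noncomputable def pdim (R : Type u) [Ring R] (M : ModuleCat.{u} R) : ℕ∞ :=
  relDim R (fun N => Module.Projective R N) M

/-- The Gorenstein projective dimension of `M`:
the `𝒳`-Gorenstein projective dimension for `𝒳` the class of projective modules. -/
noncomputable def gpd (R : Type u) [Ring R] (M : ModuleCat.{u} R) : ℕ∞ :=
  xGpd R (fun N => Module.Projective R N) M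


namespace GorensteinTwoOfThree
open Function
variable {R : Type u} [Ring R] {𝒳 : ModuleCat.{u} R → Prop}

section Helpers
variable {A B C Y P0 P1 P2 M M2 : Type u}
  [AddCommGroup A] [Module R A] [AddCommGroup B] [Module R B] [AddCommGroup C] [Module R C]
  [AddCommGroup Y] [Module R Y] [AddCommGroup P0] [Module R P0] [AddCommGroup P1] [Module R P1]
  [AddCommGroup P2] [Module R P2] [AddCommGroup M] [Module R M] [AddCommGroup M2] [Module R M2]

/-- Factor a linear map through a surjection whose kernel it kills. -/
theorem existsFactorThru (π : A →ₗ[R] B) (hπ : Surjective π) (g : A →ₗ[R] Y)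
    (h : ∀ x, π x = 0 → g x = 0) : ∃ φ : B →ₗ[R] Y, φ ∘ₗ π = g := by
  refine ⟨Submodule.liftQ (LinearMap.ker π) g (fun x hx => h x hx) ∘ₗ
    (LinearMap.quotKerEquivOfSurjective π hπ).symm.toLinearMap, ?_⟩
  ext a
  have : (LinearMap.quotKerEquivOfSurjective π hπ).symm (π a)
      = Submodule.Quotient.mk a := by
    apply (LinearMap.quotKerEquivOfSurjective π hπ).injective
    simp [LinearMap.quotKerEquivOfSurjective]
  simp [this]
  exact Submodule.liftQ_apply _ _ _

theorem spliceExact (π₀ : P0 →ₗ[R] M) (ι₁ : M →ₗ[R] P1) (π₁ : P1 →ₗ[R] M2)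
    (ι₂ : M2 →ₗ[R] P2) (hπ₀ : Surjective π₀) (hι₂ : Injective ι₂)
    (hex : Exact ι₁ π₁) : Exact (ι₁ ∘ₗ π₀) (ι₂ ∘ₗ π₁) := by
  intro y
  constructor
  · intro h
    have h1 : π₁ y = 0 := by
      have := map_eq_zero_iff ι₂ hι₂ |>.mp h
      simpa using this
    obtain ⟨x, hx⟩ := (hex y).mp h1
    obtain ⟨z, hz⟩ := hπ₀ x
    exact ⟨z, by simp [hz, hx]⟩
  · rintro ⟨z, rfl⟩
    have : π₁ (ι₁ (π₀ z)) = 0 := hex.apply_apply_eq_zero (π₀ z)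
    simp [this]

theorem spliceHomExact (π₀ : P0 →ₗ[R] M) (ι₁ : M →ₗ[R] P1) (π₁ : P1 →ₗ[R] M2)
    (ι₂ : M2 →ₗ[R] P2) (hπ₀ : Surjective π₀) (hπ₁ : Surjective π₁)
    (hex : Exact ι₁ π₁)
    (hext : ∀ φ : M2 →ₗ[R] Y, ∃ Φ : P2 →ₗ[R] Y, Φ ∘ₗ ι₂ = φ) :
    Exact (fun f : P2 →ₗ[R] Y => f ∘ₗ (ι₂ ∘ₗ π₁)) (fun f : P1 →ₗ[R] Y => f ∘ₗ (ι₁ ∘ₗ π₀)) := by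
  intro g
  constructor
  · intro h
    -- g : P1 → Y with g ∘ ι₁ ∘ π₀ = 0, so g ∘ ι₁ = 0
    have hgι : ∀ m : M, g (ι₁ m) = 0 := by
      intro m
      obtain ⟨x, rfl⟩ := hπ₀ m
      exact congrFun (congrArg (fun (f : P0 →ₗ[R] Y) => (f : P0 → Y)) h) x
    -- factor g through π₁
    have hker : ∀ x, π₁ x = 0 → g x = 0 := by
      intro x hx
      obtain ⟨m, rfl⟩ := (hex x).mp hx
      exact hgι m
    obtain ⟨φ, hφ⟩ := existsFactorThru π₁ hπ₁ g hker
    obtain ⟨Φ, hΦ⟩ := hext φ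
    refine ⟨Φ, ?_⟩
    ext x
    have : Φ (ι₂ (π₁ x)) = φ (π₁ x) := congrFun (congrArg (fun (f : M2 →ₗ[R] Y) => (f : M2 → Y)) hΦ) (π₁ x)
    simpa [this] using congrFun (congrArg (fun (f : P1 →ₗ[R] Y) => (f : P1 → Y)) hφ) x
  · rintro ⟨h, rfl⟩
    ext x
    have : π₁ (ι₁ (π₀ x)) = 0 := hex.apply_apply_eq_zero (π₀ x)
    simp [this]

/-- A surjection onto a projective module splits. -/
theorem sectionOfSurjective [Module.Projective R M] (ρ : A →ₗ[R] M) (hρ : Surjective ρ) :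
    ∃ s : M →ₗ[R] A, ρ ∘ₗ s = LinearMap.id :=
  Module.projective_lifting_property ρ LinearMap.id hρ

/-- Internal splitting: a split SES gives `L × Q ≃ Y`. -/
noncomputable def splitEquiv (ι : A →ₗ[R] B) (ρ : B →ₗ[R] C) (hι : Injective ι)
    (hex : Exact ι ρ) (s : C →ₗ[R] B) (hs : ρ ∘ₗ s = LinearMap.id) :
    (A × C) ≃ₗ[R] B := by
  refine LinearEquiv.ofBijective (LinearMap.coprod ι s) ⟨?_, ?_⟩
  · rintro ⟨a₁, c₁⟩ ⟨a₂, c₂⟩ h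
    simp only [LinearMap.coprod_apply] at h
    have hρs : ∀ c, ρ (s c) = c := fun c => congrFun (congrArg (fun (f : C →ₗ[R] C) => (f : C → C)) hs) c
    have hc : c₁ = c₂ := by
      have := congrArg ρ h
      simpa [hρs, (hex _).mpr ⟨a₁, rfl⟩, (hex _).mpr ⟨a₂, rfl⟩] using this
    subst hc
    have : ι a₁ = ι a₂ := add_right_cancel h
    exact Prod.ext (hι this) rfl
  · intro b
    have hρs : ∀ c, ρ (s c) = c := fun c => congrFun (congrArg (fun (f : C →ₗ[R] C) => (f : C → C)) hs) c
    have : ρ (b - s (ρ b)) = 0 := by simp [hρs]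
    obtain ⟨a, ha⟩ := (hex _).mp this
    exact ⟨(a, ρ b), by simp [ha]⟩

end Helpers

section Pcast
variable (C : XCompleteResolution R 𝒳)

def pcast {a b : ℤ} (h : a = b) : C.P a →ₗ[R] C.P b := h ▸ LinearMap.id

theorem pcast_injective {a b : ℤ} (h : a = b) : Injective (pcast C h) := by
  subst h; exact fun x y hxy => hxy

theorem exact_pcast {a₁ a₂ a₃ : ℤ} (h₁ : a₁ + 1 = a₂) (h₂ : a₂ + 1 = a₃) :
    Function.Exact (pcast C h₁ ∘ₗ C.d a₁) (pcast C h₂ ∘ₗ C.d a₂) := by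
  subst h₁; subst h₂
  simpa [pcast] using C.exact a₁

theorem homExact_pcast {Y : ModuleCat.{u} R} (hY : 𝒳 Y)
    {a₁ a₂ a₃ : ℤ} (h₁ : a₁ + 1 = a₂) (h₂ : a₂ + 1 = a₃) :
    Function.Exact (fun f : C.P a₃ →ₗ[R] Y => f ∘ₗ (pcast C h₂ ∘ₗ C.d a₂))
      (fun f : C.P a₂ →ₗ[R] Y => f ∘ₗ (pcast C h₁ ∘ₗ C.d a₁)) := by
  subst h₁; subst h₂
  simpa [pcast] using C.homExact Y hY a₁

/-- Shift a complete resolution by `b`. -/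
def shiftXCR (b : ℤ) : XCompleteResolution R 𝒳 where
  P n := C.P (n + b)
  d n := pcast C (by omega : n + b + 1 = n + 1 + b) ∘ₗ C.d (n + b)
  projective n := C.projective (n + b)
  exact n := exact_pcast C (by omega) (by omega)
  homExact Y hY n := homExact_pcast C hY (by omega) (by omega)

theorem ker_shiftXCR (b : ℤ) :
    LinearMap.ker ((shiftXCR C b).d 0) = LinearMap.ker (C.d (0 + b)) := by
  ext x
  simp only [LinearMap.mem_ker, shiftXCR, LinearMap.comp_apply]
  constructor
  · intro h
    exact pcast_injective C (by omega : (0:ℤ) + b + 1 = 0 + 1 + b)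
      (by rw [map_zero]; exact h)
  · intro h
    exact (congrArg (pcast C (by omega : (0:ℤ) + b + 1 = 0 + 1 + b))
      (LinearMap.mem_ker.mp h)).trans (map_zero _)

end Pcast

section GPbasics

theorem gp_of_equiv {G G' : ModuleCat.{u} R} (e : G ≃ₗ[R] G')
    (h : XGorensteinProjective R 𝒳 G) : XGorensteinProjective R 𝒳 G' := by
  obtain ⟨C, ⟨e₀⟩⟩ := h
  exact ⟨C, ⟨e.symm.trans e₀⟩⟩

/-- every kernel of a complete resolution is X-Gorenstein projective -/
theorem gp_ker (C : XCompleteResolution R 𝒳) (b : ℤ) :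
    XGorensteinProjective R 𝒳 (ModuleCat.of R (LinearMap.ker (C.d b))) := by
  have key : XGorensteinProjective R 𝒳 (ModuleCat.of R (LinearMap.ker (C.d (0 + b)))) :=
    ⟨shiftXCR C b, ⟨LinearEquiv.ofEq _ _ (ker_shiftXCR C b).symm⟩⟩
  rwa [zero_add] at key

/-- projective modules are X-Gorenstein projective -/
theorem gp_of_projective (M : ModuleCat.{u} R) (hM : Module.Projective R M) :
    XGorensteinProjective R 𝒳 M := by
  classical
  refine ⟨⟨fun _ => M, fun n => if Even n then 0 else LinearMap.id, fun _ => hM, ?_, ?_⟩, ⟨?_⟩⟩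
  · intro n x
    by_cases h : Even n
    · have h1 : ¬ Even (n + 1) := by simp [Int.even_add_one, h]
      simp only [h, h1, if_true, if_false]
      constructor
      · intro hx
        exact ⟨x, by simpa using hx.symm⟩
      · rintro ⟨y, rfl⟩; simp
    · have h1 : Even (n + 1) := Int.even_add_one.mpr h
      simp only [h, h1, if_true, if_false]
      constructor
      · intro _; exact ⟨x, rfl⟩
      · intro _; rfl
  · intro Y hY n
    by_cases h : Even n
    · have h1 : ¬ Even (n + 1) := by simp [Int.even_add_one, h]
      intro f
      simp only [h, h1, if_true, if_false]
      constructor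
      · intro _; exact ⟨f, by ext x; simp⟩
      · intro _; ext x; simp
    · have h1 : Even (n + 1) := Int.even_add_one.mpr h
      intro f
      simp only [h, h1, if_true, if_false]
      constructor
      · intro hx
        refine ⟨0, ?_⟩
        have h2 : f ∘ₗ LinearMap.id = (0 : M →ₗ[R] Y) := hx
        ext x
        simpa using (congrFun (congrArg (fun (g : M →ₗ[R] Y) => (g : M → Y)) h2) x).symm
      · rintro ⟨y, rfl⟩
        ext x; simp
  · have h0 : (if Even (0:ℤ) then (0 : M →ₗ[R] M) else LinearMap.id) = 0 := if_pos ⟨0, by norm_num⟩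
    show ↑M ≃ₗ[R]
      ↥(LinearMap.ker (if Even (0:ℤ) then (0 : M →ₗ[R] M) else LinearMap.id))
    rw [h0]
    exact Submodule.topEquiv.symm.trans (LinearEquiv.ofEq _ _ LinearMap.ker_zero.symm)

theorem gp_zero : XGorensteinProjective R 𝒳 (ModuleCat.of R PUnit.{u+1}) :=
  gp_of_projective _ inferInstance

end GPbasics


section ExtVanish

/-- `Ext¹(G, Y) = 0`, expressed by splitting of all short exact sequences. -/
def ExtVanish (Y G : ModuleCat.{u} R) : Prop :=
  ∀ (W : ModuleCat.{u} R) (j : Y →ₗ[R] W) (π : W →ₗ[R] G),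
    Injective j → Surjective π → Exact j π →
      ∃ s : G →ₗ[R] W, π ∘ₗ s = LinearMap.id

theorem extVanish_of_equiv {Y G G' : ModuleCat.{u} R} (e : G ≃ₗ[R] G')
    (h : ExtVanish Y G) : ExtVanish Y G' := by
  intro W j π hj hπ hex
  have hπ₂ : Surjective ((e.symm : G' →ₗ[R] G) ∘ₗ π) := e.symm.surjective.comp hπ
  have hex₂ : Exact j ((e.symm : G' →ₗ[R] G) ∘ₗ π) := by
    intro w
    rw [LinearMap.comp_apply]
    constructor
    · intro hw
      have hw2 : π w = 0 := by
        have := congrArg e hw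
        simpa using this
      exact (hex w).mp hw2
    · rintro ⟨y, rfl⟩
      have : π (j y) = 0 := (hex (j y)).mpr ⟨y, rfl⟩
      simp [LinearMap.comp_apply, this]
  obtain ⟨s, hs⟩ := h W j ((e.symm : G' →ₗ[R] G) ∘ₗ π) hj hπ₂ hex₂
  refine ⟨s ∘ₗ (e.symm : G' →ₗ[R] G), ?_⟩
  ext x
  have h1 : e.symm (π (s (e.symm x))) = e.symm x :=
    congrFun (congrArg (fun (f : ↑G →ₗ[R] ↑G) => (f : ↑G → ↑G)) hs) (e.symm x)
  have h2 := congrArg e h1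
  simpa using h2

/-- maps out of a kernel of the complete resolution extend to the next projective. -/
theorem extend_ker_map (C : XCompleteResolution R 𝒳) {Y : ModuleCat.{u} R} (hY : 𝒳 Y)
    (b : ℤ) (φ : (ModuleCat.of R (LinearMap.ker (C.d (b+1+1)))) →ₗ[R] Y) :
    ∃ h : C.P (b+1+1) →ₗ[R] Y, ∀ z : LinearMap.ker (C.d (b+1+1)), h z.1 = φ z := by
  have hmem : ∀ x, C.d (b+1) x ∈ LinearMap.ker (C.d (b+1+1)) := fun x =>
    (C.exact (b+1) (C.d (b+1) x)).mpr ⟨x, rfl⟩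
  have hf0 : (φ ∘ₗ LinearMap.codRestrict (LinearMap.ker (C.d (b+1+1))) (C.d (b+1)) hmem)
      ∘ₗ C.d b = 0 := by
    ext x
    have h0 : (LinearMap.codRestrict (LinearMap.ker (C.d (b+1+1))) (C.d (b+1)) hmem)
        (C.d b x) = 0 := Subtype.ext ((C.exact b).apply_apply_eq_zero x)
    show φ ((LinearMap.codRestrict (LinearMap.ker (C.d (b+1+1))) (C.d (b+1)) hmem)
      (C.d b x)) = 0
    rw [h0, map_zero]
  obtain ⟨h, hh⟩ := (C.homExact Y hY b
    (φ ∘ₗ LinearMap.codRestrict (LinearMap.ker (C.d (b+1+1))) (C.d (b+1)) hmem)).mp hf0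
  refine ⟨h, ?_⟩
  rintro ⟨z, hz⟩
  obtain ⟨w, hw⟩ : z ∈ LinearMap.range (C.d (b+1)) := by
    rw [← LinearMap.exact_iff.mp (C.exact (b+1))]
    exact hz
  have h1 : h (C.d (b+1) w)
      = φ ((LinearMap.codRestrict (LinearMap.ker (C.d (b+1+1))) (C.d (b+1)) hmem) w) :=
    congrFun (congrArg (fun (q : C.P (b+1) →ₗ[R] Y) => (q : _ → _)) hh) w
  have h2 : (LinearMap.codRestrict (LinearMap.ker (C.d (b+1+1))) (C.d (b+1)) hmem) w
      = (⟨z, hz⟩ : LinearMap.ker (C.d (b+1+1))) := Subtype.ext hw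
  rw [hw] at h1
  rw [h1, h2]

theorem extVanish_ker (C : XCompleteResolution R 𝒳) {Y : ModuleCat.{u} R} (hY : 𝒳 Y)
    (b : ℤ) : ExtVanish Y (ModuleCat.of R (LinearMap.ker (C.d (b+1+1+1)))) := by
  intro W j π hj hπ hex
  letI : Module.Projective R (C.P (b+1+1)) := C.projective (b+1+1)
  have hmem : ∀ x, C.d (b+1+1) x ∈ LinearMap.ker (C.d (b+1+1+1)) := fun x =>
    (C.exact (b+1+1) (C.d (b+1+1) x)).mpr ⟨x, rfl⟩
  have hρs : Surjective
      (LinearMap.codRestrict (LinearMap.ker (C.d (b+1+1+1))) (C.d (b+1+1)) hmem) := by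
    rintro ⟨z, hz⟩
    obtain ⟨w, hw⟩ : z ∈ LinearMap.range (C.d (b+1+1)) := by
      rw [← LinearMap.exact_iff.mp (C.exact (b+1+1))]
      exact hz
    exact ⟨w, Subtype.ext hw⟩
  obtain ⟨σ, hσ⟩ := Module.projective_lifting_property π
    (LinearMap.codRestrict (LinearMap.ker (C.d (b+1+1+1))) (C.d (b+1+1)) hmem) hπ
  have hσap : ∀ x, π (σ x)
      = (LinearMap.codRestrict (LinearMap.ker (C.d (b+1+1+1))) (C.d (b+1+1)) hmem) x :=
    fun x => congrFun (congrArg (fun (q : _ →ₗ[R] _) => (q : _ → _)) hσ) x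
  have hσmem : ∀ z : LinearMap.ker (C.d (b+1+1)), σ z.1 ∈ LinearMap.range j := by
    rintro ⟨z, hz⟩
    refine (hex (σ z)).mp ?_
    rw [hσap z]
    exact Subtype.ext hz
  obtain ⟨φ₀, hjφ₀⟩ : ∃ φ₀ : (ModuleCat.of R (LinearMap.ker (C.d (b+1+1)))) →ₗ[R] Y,
      ∀ z : LinearMap.ker (C.d (b+1+1)), j (φ₀ z) = σ z.1 := by
    refine ⟨((LinearEquiv.ofInjective j hj).symm : LinearMap.range j →ₗ[R] Y) ∘ₗ
      LinearMap.codRestrict (LinearMap.range j)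
        (σ ∘ₗ (LinearMap.ker (C.d (b+1+1))).subtype) (fun z => hσmem z), ?_⟩
    intro z
    have h2 := (LinearEquiv.ofInjective j hj).apply_symm_apply ⟨σ z.1, hσmem z⟩
    have h3 : j ((LinearEquiv.ofInjective j hj).symm ⟨σ z.1, hσmem z⟩)
        = ((LinearEquiv.ofInjective j hj) ((LinearEquiv.ofInjective j hj).symm
            ⟨σ z.1, hσmem z⟩)).1 := rfl
    rw [h2] at h3
    exact h3
  obtain ⟨h, hh⟩ := extend_ker_map C hY b φ₀
  have hτker : ∀ x, (LinearMap.codRestrict (LinearMap.ker (C.d (b+1+1+1)))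
      (C.d (b+1+1)) hmem) x = 0 → (σ - j ∘ₗ h) x = 0 := by
    intro x hx
    have hxk : x ∈ LinearMap.ker (C.d (b+1+1)) := by
      have := congrArg Subtype.val hx
      simpa using this
    have hhx : h x = φ₀ ⟨x, hxk⟩ := hh ⟨x, hxk⟩
    have : j (φ₀ ⟨x, hxk⟩) = σ x := hjφ₀ ⟨x, hxk⟩
    simp only [LinearMap.sub_apply, LinearMap.comp_apply, hhx, this, sub_self]
  obtain ⟨s, hs⟩ := existsFactorThru _ hρs (σ - j ∘ₗ h) hτker
  refine ⟨s, ?_⟩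
  ext k
  obtain ⟨x, rfl⟩ := hρs k
  have h1 : s ((LinearMap.codRestrict (LinearMap.ker (C.d (b+1+1+1))) (C.d (b+1+1)) hmem) x)
      = (σ - j ∘ₗ h) x :=
    congrFun (congrArg (fun (q : _ →ₗ[R] _) => (q : _ → _)) hs) x
  have h3 : π (j (h x)) = 0 := hex.apply_apply_eq_zero (h x)
  rw [LinearMap.comp_apply, LinearMap.id_apply]
  congr 1
  show π (s ((LinearMap.codRestrict (LinearMap.ker (C.d (b+1+1+1))) (C.d (b+1+1)) hmem) x))
    = (LinearMap.codRestrict (LinearMap.ker (C.d (b+1+1+1))) (C.d (b+1+1)) hmem) x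
  rw [h1, LinearMap.sub_apply, LinearMap.comp_apply, map_sub, h3, sub_zero]
  exact hσap x

/-- Ext vanishing against Gorenstein projectives (the key consequence of total acyclicity). -/
theorem gp_extVanish {G Y : ModuleCat.{u} R} (hG : XGorensteinProjective R 𝒳 G)
    (hY : 𝒳 Y) : ExtVanish Y G := by
  obtain ⟨C, ⟨e⟩⟩ := hG
  have key := extVanish_ker C hY (-3)
  have e2 : (ModuleCat.of R (LinearMap.ker (C.d ((-3:ℤ)+1+1+1)))) ≃ₗ[R] G :=
    (e.symm : (LinearMap.ker (C.d 0) : Submodule R (C.P 0)) ≃ₗ[R] G)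
  exact extVanish_of_equiv e2 key

end ExtVanish


section Shifts

/-- Right shift: embed a Gorenstein projective into a projective with GP cokernel. -/
theorem gp_right_shift {G : ModuleCat.{u} R} (hG : XGorensteinProjective R 𝒳 G) :
    ∃ (P Q : ModuleCat.{u} R) (ι : G →ₗ[R] P) (π : P →ₗ[R] Q),
      Module.Projective R P ∧ XGorensteinProjective R 𝒳 Q ∧
      Injective ι ∧ Surjective π ∧ Exact ι π := by
  obtain ⟨C, ⟨e⟩⟩ := hG
  refine ⟨C.P 0, ModuleCat.of R (C.P 0 ⧸ LinearMap.ker (C.d 0)),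
    (LinearMap.ker (C.d 0)).subtype ∘ₗ (e : G →ₗ[R] LinearMap.ker (C.d 0)),
    (LinearMap.ker (C.d 0)).mkQ, C.projective 0, ?_, ?_, ?_, ?_⟩
  · -- cokernel is GP : it is isomorphic to ker (C.d 1)
    have e2 : (ModuleCat.of R (C.P 0 ⧸ LinearMap.ker (C.d 0))) ≃ₗ[R]
        (ModuleCat.of R (LinearMap.ker (C.d 1))) := by
      refine (LinearMap.quotKerEquivRange (C.d 0)).trans (LinearEquiv.ofEq _ _ ?_)
      exact (LinearMap.exact_iff.mp (C.exact 0)).symm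
    exact gp_of_equiv e2.symm (gp_ker C 1)
  · exact (LinearMap.ker (C.d 0)).injective_subtype.comp e.injective
  · exact Submodule.mkQ_surjective _
  · intro x
    show (Submodule.Quotient.mk x : C.P 0 ⧸ LinearMap.ker (C.d 0)) = 0 ↔ _
    rw [Submodule.Quotient.mk_eq_zero]
    constructor
    · intro hx
      exact ⟨e.symm ⟨x, hx⟩, by simp⟩
    · rintro ⟨y, rfl⟩
      simp only [LinearMap.comp_apply, Submodule.coe_subtype]
      exact (e y).2

/-- Left shift: cover a Gorenstein projective by a projective with GP kernel. -/
theorem gp_left_shift {G : ModuleCat.{u} R} (hG : XGorensteinProjective R 𝒳 G) :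
    ∃ (P K : ModuleCat.{u} R) (ι : K →ₗ[R] P) (π : P →ₗ[R] G),
      Module.Projective R P ∧ XGorensteinProjective R 𝒳 K ∧
      Injective ι ∧ Surjective π ∧ Exact ι π := by
  obtain ⟨C, ⟨e⟩⟩ := hG
  have hmem : ∀ x, C.d (-1) x ∈ LinearMap.ker (C.d 0) := fun x =>
    (C.exact (-1) (C.d (-1) x)).mpr ⟨x, rfl⟩
  have hρs : Surjective (LinearMap.codRestrict (LinearMap.ker (C.d 0)) (C.d (-1)) hmem) := by
    rintro ⟨z, hz⟩
    obtain ⟨w, hw⟩ : (show C.P (-1 + 1) from z) ∈ LinearMap.range (C.d (-1)) := by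
      rw [← LinearMap.exact_iff.mp (C.exact (-1))]
      exact hz
    exact ⟨w, Subtype.ext hw⟩
  refine ⟨C.P (-1), ModuleCat.of R (LinearMap.ker (C.d (-1))),
    (LinearMap.ker (C.d (-1))).subtype,
    (e.symm : LinearMap.ker (C.d 0) →ₗ[R] G) ∘ₗ
      LinearMap.codRestrict (LinearMap.ker (C.d 0)) (C.d (-1)) hmem,
    C.projective (-1), gp_ker C (-1), (LinearMap.ker (C.d (-1))).injective_subtype,
    e.symm.surjective.comp hρs, ?_⟩
  intro x
  rw [LinearMap.comp_apply]
  constructor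
  · intro hx
    have h0 : (LinearMap.codRestrict (LinearMap.ker (C.d 0)) (C.d (-1)) hmem) x = 0 := by
      apply e.symm.injective
      simpa using hx
    have : C.d (-1) x = 0 := by
      have := congrArg Subtype.val h0
      simpa using this
    exact ⟨⟨x, this⟩, rfl⟩
  · rintro ⟨⟨y, hy⟩, rfl⟩
    have h0 : (LinearMap.codRestrict (LinearMap.ker (C.d 0)) (C.d (-1)) hmem)
        ((LinearMap.ker (C.d (-1))).subtype ⟨y, hy⟩) = 0 := Subtype.ext (by simpa using hy)
    have := congrArg e.symm h0
    simpa using this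

end Shifts

section MapExtension

/-- Extension of maps into `Y` along an injection whose cokernel satisfies `ExtVanish Y`. -/
theorem extendOfExtVanish {A E C Y : ModuleCat.{u} R} (i : A →ₗ[R] E) (g : E →ₗ[R] C)
    (hi : Injective i) (hg : Surjective g) (hex : Exact i g) (hv : ExtVanish Y C)
    (φ : A →ₗ[R] Y) : ∃ Φ : E →ₗ[R] Y, Φ ∘ₗ i = φ := by
  classical
  -- pushout E' := (Y × E) / N, N = {(φ a, -i a)}
  set N : Submodule R (Y × E) := LinearMap.range (LinearMap.prod φ (-i)) with hN
  let E' := ModuleCat.of R ((Y × E) ⧸ N)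
  let jE : Y →ₗ[R] E' := N.mkQ ∘ₗ LinearMap.inl R Y E
  have hgN : ∀ x ∈ N, g x.2 = 0 := by
    rintro x ⟨a, rfl⟩
    simp only [LinearMap.prod_apply, Pi.prod, LinearMap.neg_apply]
    simp [(hex (i a)).mpr ⟨a, rfl⟩]
  let πC : E' →ₗ[R] C := Submodule.liftQ N (g ∘ₗ LinearMap.snd R Y E)
    (fun x hx => by simpa using hgN x hx)
  have hπCmk : ∀ (y : Y) (x : E), πC (Submodule.Quotient.mk (y, x)) = g x :=
    fun y x => rfl
  have hjE : Injective jE := by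
    intro y₁ y₂ h
    have h' : (Submodule.Quotient.mk ((y₁, (0:E))) : (Y × E) ⧸ N)
        = Submodule.Quotient.mk ((y₂, (0:E))) := h
    have h2 : ((y₁, (0:E)) - (y₂, (0:E))) ∈ N := (Submodule.Quotient.eq N).mp h'
    obtain ⟨a, ha⟩ := h2
    have ha1 : φ a = y₁ - y₂ := by
      have := congrArg Prod.fst ha
      simpa using this
    have ha2 : -(i a) = (0:E) - 0 := by
      have := congrArg Prod.snd ha
      simpa using this
    have ha0 : a = 0 := hi (by simpa using ha2)
    rw [ha0, map_zero] at ha1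
    exact sub_eq_zero.mp ha1.symm
  have hπC : Surjective πC := by
    intro c
    obtain ⟨x, rfl⟩ := hg c
    exact ⟨Submodule.Quotient.mk ((0:Y), x), hπCmk 0 x⟩
  have hexE : Exact jE πC := by
    intro w
    obtain ⟨⟨y, x⟩, rfl⟩ := N.mkQ_surjective w
    constructor
    · intro hw
      have hgx : g x = 0 := by
        have : πC (Submodule.Quotient.mk (y, x)) = 0 := hw
        rwa [hπCmk] at this
      obtain ⟨a, ha⟩ := (hex x).mp hgx
      refine ⟨y + φ a, ?_⟩
      show (Submodule.Quotient.mk ((y + φ a, (0:E))) : (Y × E) ⧸ N)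
        = Submodule.Quotient.mk (y, x)
      rw [Submodule.Quotient.eq]
      exact ⟨a, by simp [Prod.ext_iff, ha]⟩
    · rintro ⟨y', hy'⟩
      rw [← hy']
      exact (hπCmk y' 0).trans (map_zero g)
  obtain ⟨sC, hsC⟩ := hv E' jE πC hjE hπC hexE
  -- retraction r : E' → Y
  have hδ : ∀ x : E', x - sC (πC x) ∈ LinearMap.range jE := by
    intro x
    have h1 : πC (sC (πC x)) = πC x :=
      congrFun (congrArg (fun (f : ↑C →ₗ[R] ↑C) => (f : ↑C → ↑C)) hsC) (πC x)
    exact (hexE _).mp (by simp [map_sub, h1])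
  let r : E' →ₗ[R] Y := ((LinearEquiv.ofInjective jE hjE).symm : LinearMap.range jE →ₗ[R] Y) ∘ₗ
    LinearMap.codRestrict (LinearMap.range jE) (LinearMap.id - sC ∘ₗ πC) (fun x => hδ x)
  have hr : ∀ y : Y, r (jE y) = y := by
    intro y
    have h1 : jE y - sC (πC (jE y)) = jE y := by
      have : πC (jE y) = 0 := (hexE (jE y)).mpr ⟨y, rfl⟩
      simp [this]
    have h2 : (LinearMap.codRestrict (LinearMap.range jE) (LinearMap.id - sC ∘ₗ πC)
        (fun x => hδ x)) (jE y) = ⟨jE y, ⟨y, rfl⟩⟩ := Subtype.ext (by simpa using h1)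
    show ((LinearEquiv.ofInjective jE hjE).symm : LinearMap.range jE →ₗ[R] Y)
      ((LinearMap.codRestrict (LinearMap.range jE) (LinearMap.id - sC ∘ₗ πC) (fun x => hδ x))
        (jE y)) = y
    rw [h2]
    apply hjE
    have h3 : jE ((LinearEquiv.ofInjective jE hjE).symm ⟨jE y, ⟨y, rfl⟩⟩)
        = ((LinearEquiv.ofInjective jE hjE) ((LinearEquiv.ofInjective jE hjE).symm
            ⟨jE y, ⟨y, rfl⟩⟩)).1 := rfl
    rw [(LinearEquiv.ofInjective jE hjE).apply_symm_apply] at h3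
    exact h3
  refine ⟨r ∘ₗ (N.mkQ ∘ₗ LinearMap.inr R Y E), ?_⟩
  ext a
  have key : (Submodule.Quotient.mk (((0:Y), i a)) : (Y × E) ⧸ N)
      = Submodule.Quotient.mk ((φ a, (0:E))) := by
    rw [Submodule.Quotient.eq]
    exact ⟨-a, by simp [Prod.ext_iff]⟩
  show r (Submodule.Quotient.mk ((0:Y), i a)) = φ a
  rw [key]
  exact hr (φ a)

/-- ExtVanish is closed under extensions in the second argument. -/
theorem extVanish_ext {A E C Y : ModuleCat.{u} R} (i : A →ₗ[R] E) (g : E →ₗ[R] C)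
    (hi : Injective i) (hg : Surjective g) (hex : Exact i g)
    (hA : ExtVanish Y A) (hC : ExtVanish Y C) : ExtVanish Y E := by
  intro W j π hj hπ hexW
  -- W_A := preimage of A in W
  let WA : Submodule R W := LinearMap.ker (g ∘ₗ π)
  have hπA : ∀ w : WA, π w.1 ∈ LinearMap.range i := fun w => (hex (π w.1)).mp (by
    have h := w.2
    rwa [LinearMap.mem_ker, LinearMap.comp_apply] at h)
  let πA : (ModuleCat.of R WA) →ₗ[R] A :=
    ((LinearEquiv.ofInjective i hi).symm : LinearMap.range i →ₗ[R] A) ∘ₗ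
      LinearMap.codRestrict (LinearMap.range i) (π ∘ₗ WA.subtype) hπA
  have hiπA : ∀ w : WA, i (πA w) = π w.1 := by
    intro w
    have h3 : i ((LinearEquiv.ofInjective i hi).symm ⟨π w.1, hπA w⟩)
        = ((LinearEquiv.ofInjective i hi) ((LinearEquiv.ofInjective i hi).symm
            ⟨π w.1, hπA w⟩)).1 := rfl
    rw [(LinearEquiv.ofInjective i hi).apply_symm_apply] at h3
    exact h3
  have hjA : ∀ y : Y, j y ∈ WA := fun y => by
    have : π (j y) = 0 := (hexW (j y)).mpr ⟨y, rfl⟩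
    simp [WA, this]
  obtain ⟨sA, hsA⟩ := hA (ModuleCat.of R WA) (LinearMap.codRestrict WA j hjA) πA
    (fun y₁ y₂ h => hj (congrArg Subtype.val h))
    (by intro a
        obtain ⟨w, hw⟩ := hπ (i a)
        have hwA : w ∈ WA := by simp [WA, hw, (hex (i a)).mpr ⟨a, rfl⟩]
        exact ⟨⟨w, hwA⟩, hi (by rw [hiπA ⟨w, hwA⟩]; exact hw)⟩)
    (by intro w
        constructor
        · intro hw
          have : π w.1 = 0 := by rw [← hiπA w, hw, map_zero]
          obtain ⟨y, hy⟩ := (hexW w.1).mp this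
          exact ⟨y, Subtype.ext hy⟩
        · rintro ⟨y, rfl⟩
          apply hi
          rw [hiπA]
          simp only [LinearMap.codRestrict_apply, map_zero]
          exact (hexW (j y)).mpr ⟨y, rfl⟩)
  have hπsA : ∀ a, πA (sA a) = a := fun a =>
    congrFun (congrArg (fun (f : ↑A →ₗ[R] ↑A) => (f : ↑A → ↑A)) hsA) a
  -- σ : A → W with π σ = i
  let σ : A →ₗ[R] W := WA.subtype ∘ₗ sA
  have hπσ : ∀ a, π (σ a) = i a := fun a => by
    rw [show π (σ a) = i (πA (sA a)) from (hiπA (sA a)).symm, hπsA]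
  -- quotient by N := range σ
  let N : Submodule R W := LinearMap.range σ
  let W' := ModuleCat.of R (W ⧸ N)
  have hgπN : ∀ x ∈ N, g (π x) = 0 := by
    rintro x ⟨a, rfl⟩
    rw [hπσ a]
    exact (hex (i a)).mpr ⟨a, rfl⟩
  let ρ : W' →ₗ[R] C := Submodule.liftQ N (g ∘ₗ π) (fun x hx => by simpa using hgπN x hx)
  have hρmk : ∀ w : W, ρ (Submodule.Quotient.mk w) = g (π w) := fun w => rfl
  let j' : Y →ₗ[R] W' := N.mkQ ∘ₗ j
  have hj'mk : ∀ y : Y, j' y = Submodule.Quotient.mk (j y) := fun _ => rfl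
  have hj' : Injective j' := by
    intro y₁ y₂ h
    have h2 : j y₁ - j y₂ ∈ N := by
      rw [hj'mk, hj'mk] at h
      exact (Submodule.Quotient.eq N).mp h
    obtain ⟨a, ha⟩ := h2
    have hπa : π (j y₁ - j y₂) = 0 := by
      rw [map_sub, (hexW (j y₁)).mpr ⟨y₁, rfl⟩, (hexW (j y₂)).mpr ⟨y₂, rfl⟩, sub_zero]
    rw [← ha, hπσ] at hπa
    have ha0 : a = 0 := by
      rw [← map_zero i] at hπa
      exact hi hπa
    rw [ha0, map_zero] at ha
    apply hj
    exact sub_eq_zero.mp ha.symm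
  have hρs : Surjective ρ := by
    intro c
    obtain ⟨e₀, rfl⟩ := hg c
    obtain ⟨w, rfl⟩ := hπ e₀
    exact ⟨Submodule.Quotient.mk w, hρmk w⟩
  have hexρ : Exact j' ρ := by
    intro w'
    obtain ⟨w, rfl⟩ := N.mkQ_surjective w'
    constructor
    · intro hw
      have hwA : w ∈ WA := by
        have : g (π w) = 0 := by rw [← hρmk w]; exact hw
        simpa [WA] using this
      obtain ⟨y, hy⟩ := (hexW (w - σ (πA ⟨w, hwA⟩))).mp (by
        rw [map_sub, hπσ, hiπA ⟨w, hwA⟩]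
        exact sub_self _)
      refine ⟨y, ?_⟩
      rw [hj'mk]
      show (Submodule.Quotient.mk (j y) : W ⧸ N) = Submodule.Quotient.mk w
      rw [Submodule.Quotient.eq]
      rw [hy]
      exact ⟨-(πA ⟨w, hwA⟩), by simp⟩
    · rintro ⟨y, hy⟩
      rw [← hy, hj'mk]
      show ρ (Submodule.Quotient.mk (j y)) = 0
      rw [hρmk, (hexW (j y)).mpr ⟨y, rfl⟩, map_zero]
  obtain ⟨t, ht⟩ := hC W' j' ρ hj' hρs hexρ
  have hρt : ∀ c, ρ (t c) = c := fun c =>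
    congrFun (congrArg (fun (f : ↑C →ₗ[R] ↑C) => (f : ↑C → ↑C)) ht) c
  -- V := preimage of range t under mkQ
  let V : Submodule R W := (LinearMap.range t).comap N.mkQ
  let πV : (ModuleCat.of R V) →ₗ[R] E := π ∘ₗ V.subtype
  have hinj : Injective πV := by
    rintro ⟨v₁, hv₁⟩ ⟨v₂, hv₂⟩ h
    have h0 : π (v₁ - v₂) = 0 := by
      rw [map_sub, sub_eq_zero]
      exact h
    obtain ⟨y, hy⟩ := (hexW (v₁ - v₂)).mp h0
    obtain ⟨c₁, hc₁⟩ := hv₁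
    obtain ⟨c₂, hc₂⟩ := hv₂
    have hjy : j' y = t c₁ - t c₂ := by
      rw [hj'mk]
      show N.mkQ (j y) = t c₁ - t c₂
      rw [hy, map_sub, hc₁, hc₂]
    have hρjy : ρ (j' y) = 0 := by
      rw [hj'mk]
      show ρ (Submodule.Quotient.mk (j y)) = 0
      rw [hρmk, (hexW (j y)).mpr ⟨y, rfl⟩, map_zero]
    have hc : c₁ = c₂ := by
      have : c₁ - c₂ = 0 := by
        rw [← hρt c₁, ← hρt c₂, ← map_sub, ← hjy, hρjy]
      exact sub_eq_zero.mp this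
    have hy0 : y = 0 := by
      apply hj'
      rw [hjy, hc, sub_self, map_zero]
    rw [hy0, map_zero] at hy
    exact Subtype.ext (sub_eq_zero.mp hy.symm)
  have hsurj : Surjective πV := by
    intro e₀
    obtain ⟨w₀, hw₀⟩ := N.mkQ_surjective (t (g e₀))
    have hgw₀ : g (π w₀) = g e₀ := by
      have h1 := hρt (g e₀)
      rw [← hw₀] at h1
      exact h1
    obtain ⟨a, ha⟩ := (hex (e₀ - π w₀)).mp (by rw [map_sub, hgw₀, sub_self])
    have hmem : w₀ + σ a ∈ V := by
      show N.mkQ (w₀ + σ a) ∈ LinearMap.range t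
      rw [map_add, show N.mkQ (σ a) = 0 from (Submodule.Quotient.mk_eq_zero N).mpr ⟨a, rfl⟩,
        add_zero, hw₀]
      exact ⟨g e₀, rfl⟩
    refine ⟨⟨w₀ + σ a, hmem⟩, ?_⟩
    show π (w₀ + σ a) = e₀
    rw [map_add, hπσ, ha]
    abel
  let eV := LinearEquiv.ofBijective πV ⟨hinj, hsurj⟩
  refine ⟨V.subtype ∘ₗ (eV.symm : E →ₗ[R] (ModuleCat.of R V)), ?_⟩
  ext e₀
  exact eV.apply_symm_apply e₀

end MapExtension


section ExtensionClosure
variable (𝒳)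

/-- `E` is an extension of two Gorenstein projectives. -/
def IsExtG (E : ModuleCat.{u} R) : Prop :=
  ∃ (A C : ModuleCat.{u} R) (i : A →ₗ[R] E) (g : E →ₗ[R] C),
    XGorensteinProjective R 𝒳 A ∧ XGorensteinProjective R 𝒳 C ∧
    Injective i ∧ Surjective g ∧ Exact i g

variable {𝒳}

theorem isExtG_of_gp {G : ModuleCat.{u} R} (hG : XGorensteinProjective R 𝒳 G) :
    IsExtG 𝒳 G := by
  refine ⟨G, ModuleCat.of R PUnit.{u+1}, LinearMap.id, 0, hG, gp_zero, injective_id,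
    fun x => ⟨0, Subsingleton.elim _ _⟩, ?_⟩
  intro y
  constructor
  · intro _
    exact ⟨y, rfl⟩
  · intro _
    simp

theorem extVanish_of_isExtG {E Y : ModuleCat.{u} R} (hE : IsExtG 𝒳 E) (hY : 𝒳 Y) :
    ExtVanish Y E := by
  obtain ⟨A, C, i, g, hA, hC, hi, hg, hex⟩ := hE
  exact extVanish_ext i g hi hg hex (gp_extVanish hA hY) (gp_extVanish hC hY)

variable (𝒳)

structure RStepData (E : ModuleCat.{u} R) where
  P : ModuleCat.{u} R
  next : ModuleCat.{u} R
  ι : E →ₗ[R] P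
  π : P →ₗ[R] next
  proj : Module.Projective R P
  hι : Injective ι
  hπ : Surjective π
  hex : Exact ι π
  hnext : IsExtG 𝒳 next

structure LStepData (E : ModuleCat.{u} R) where
  P : ModuleCat.{u} R
  K : ModuleCat.{u} R
  ι : K →ₗ[R] P
  π : P →ₗ[R] E
  proj : Module.Projective R P
  hι : Injective ι
  hπ : Surjective π
  hex : Exact ι π
  hK : IsExtG 𝒳 K

variable {𝒳}

theorem rstep_exists (h𝒳 : ∀ P : ModuleCat.{u} R, Module.Projective R P → 𝒳 P)
    (E : ModuleCat.{u} R) (hE : IsExtG 𝒳 E) : Nonempty (RStepData 𝒳 E) := by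
  classical
  obtain ⟨A, C, i, g, hA, hC, hi, hg, hex⟩ := hE
  obtain ⟨PA, QA, jA, pA, hPAproj, hQA, hjA, hpA, hexA⟩ := gp_right_shift hA
  obtain ⟨PC, QC, jC, pC, hPCproj, hQC, hjC, hpC, hexC⟩ := gp_right_shift hC
  obtain ⟨φ, hφ⟩ := extendOfExtVanish i g hi hg hex (gp_extVanish hC (h𝒳 PA hPAproj)) jA
  have hφap : ∀ a, φ (i a) = jA a := fun a =>
    congrFun (congrArg (fun (q : ↑A →ₗ[R] ↑PA) => (q : ↑A → ↑PA)) hφ) a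
  letI := hPAproj
  letI := hPCproj
  set ψ : E →ₗ[R] ModuleCat.of R (PA × PC) := LinearMap.prod φ (jC ∘ₗ g) with hψdef
  have hψap : ∀ e, ψ e = (φ e, jC (g e)) := fun e => rfl
  have hψ : Injective ψ := by
    intro e₁ e₂ h
    have h1 : φ e₁ = φ e₂ := congrArg Prod.fst h
    have h2 : jC (g e₁) = jC (g e₂) := congrArg Prod.snd h
    have hge : g (e₁ - e₂) = 0 := by rw [map_sub, sub_eq_zero]; exact hjC h2
    obtain ⟨a, ha⟩ := (hex _).mp hge
    have : jA a = 0 := by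
      rw [← hφap a, ha, map_sub, sub_eq_zero]
      exact h1
    have ha0 : a = 0 := by
      apply hjA
      rw [this, map_zero]
    rw [ha0, map_zero] at ha
    exact sub_eq_zero.mp ha.symm
  set nx := ModuleCat.of R ((PA × PC) ⧸ LinearMap.range ψ) with hnx
  have hexψ : Exact ψ ((LinearMap.range ψ).mkQ) := by
    intro x
    show (Submodule.Quotient.mk x : (↑PA × ↑PC) ⧸ LinearMap.range ψ) = 0 ↔ _
    rw [Submodule.Quotient.mk_eq_zero]
    exact ⟨fun ⟨e, he⟩ => ⟨e, he⟩, fun ⟨e, he⟩ => ⟨e, he⟩⟩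
  -- the next kernel is an extension of QA by QC
  have hmkα : ∀ x, pA x = 0 → (LinearMap.range ψ).mkQ ((LinearMap.inl R PA PC) x) = 0 := by
    intro x hx
    obtain ⟨a, ha⟩ := (hexA x).mp hx
    show (Submodule.Quotient.mk ((x, (0:PC))) : (↑PA × ↑PC) ⧸ LinearMap.range ψ) = 0
    rw [Submodule.Quotient.mk_eq_zero]
    refine ⟨i a, ?_⟩
    rw [hψap, hφap, ha]
    have : jC (g (i a)) = 0 := by
      rw [(hex (i a)).mpr ⟨a, rfl⟩, map_zero]
    rw [this]
  obtain ⟨α, hα⟩ := existsFactorThru pA hpA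
    ((LinearMap.range ψ).mkQ ∘ₗ LinearMap.inl R PA PC) (by
      intro x hx
      exact hmkα x hx)
  have hαap : ∀ x, α (pA x) = (LinearMap.range ψ).mkQ (x, 0) := fun x =>
    congrFun (congrArg (fun (q : ↑PA →ₗ[R] _) => (q : ↑PA → _)) hα) x
  have hnext : IsExtG 𝒳 nx := by
    refine ⟨QA, QC, α, Submodule.liftQ (LinearMap.range ψ) (pC ∘ₗ LinearMap.snd R PA PC)
      (by rintro x ⟨e, rfl⟩
          rw [hψap]
          show pC (jC (g e)) = 0
          rw [(hexC (jC (g e))).mpr ⟨g e, rfl⟩]), hQA, hQC, ?_, ?_, ?_⟩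
    · -- injectivity of α
      intro q₁ q₂ h
      obtain ⟨x₁, rfl⟩ := hpA q₁
      obtain ⟨x₂, rfl⟩ := hpA q₂
      have h' : (Submodule.Quotient.mk ((x₁, (0:PC))) : (↑PA × ↑PC) ⧸ LinearMap.range ψ)
          = Submodule.Quotient.mk ((x₂, (0:PC))) :=
        (hαap x₁).symm.trans (h.trans (hαap x₂))
      have hx : ((x₁ - x₂, (0:PC))) ∈ LinearMap.range ψ := by
        have h2 := (Submodule.Quotient.eq (LinearMap.range ψ)).mp h'
        have h2' : ((x₁, (0:PC)) : ↑PA × ↑PC) - (x₂, (0:PC)) = (x₁ - x₂, (0:PC)) := by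
          apply Prod.ext
          · rfl
          · show (0:PC) - 0 = 0
            rw [sub_zero]
        rw [h2'] at h2
        exact h2
      obtain ⟨e, he⟩ := hx
      have h2 : jC (g e) = (0:PC) := by
        have h3 := congrArg Prod.snd he
        rw [hψap] at h3
        simpa using h3
      have hge : g e = 0 := by
        apply hjC
        rw [h2, map_zero]
      obtain ⟨a, ha⟩ := (hex e).mp hge
      have h1 : jA a = x₁ - x₂ := by
        have h4 := congrArg Prod.fst he
        have h4' : φ (i a) = x₁ - x₂ := by
          rw [ha]
          exact h4
        rw [hφap] at h4'
        exact h4' 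
      rw [← sub_eq_zero, ← map_sub, ← h1]
      exact hexA.apply_apply_eq_zero a
    · -- surjectivity of the quotient map
      intro c
      obtain ⟨y, rfl⟩ := hpC c
      exact ⟨(LinearMap.range ψ).mkQ (0, y), rfl⟩
    · -- exactness
      intro z
      obtain ⟨⟨x, y⟩, rfl⟩ := (LinearMap.range ψ).mkQ_surjective z
      constructor
      · intro hz
        have hy : pC y = 0 := hz
        obtain ⟨c, hc⟩ := (hexC y).mp hy
        obtain ⟨e, he⟩ := hg c
        refine ⟨pA (x - φ e), (hαap _).trans ?_⟩
        show (Submodule.Quotient.mk ((x - φ e, (0:PC))) : (↑PA × ↑PC) ⧸ LinearMap.range ψ)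
          = Submodule.Quotient.mk (x, y)
        rw [Submodule.Quotient.eq]
        refine ⟨-e, ?_⟩
        have hpair : ((x - φ e, (0:PC)) : ↑PA × ↑PC) - (x, y) = (-(φ e), -y) := by
          apply Prod.ext
          · show x - φ e - x = -(φ e)
            abel
          · show (0:PC) - y = -y
            abel
        rw [hpair]
        show (φ (-e), jC (g (-e))) = (-(φ e), -y)
        apply Prod.ext
        · show φ (-e) = -(φ e)
          rw [map_neg]
        · show jC (g (-e)) = -y
          rw [map_neg, map_neg, he, hc]
      · rintro ⟨q, hq⟩
        obtain ⟨x', rfl⟩ := hpA q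
        have h'' := (hαap x').symm.trans hq
        rw [← h'']
        show pC 0 = 0
        rw [map_zero]
  exact ⟨⟨ModuleCat.of R (PA × PC), nx, ψ, (LinearMap.range ψ).mkQ,
    (inferInstance : Module.Projective R (↑PA × ↑PC)), hψ,
    Submodule.mkQ_surjective _, hexψ, hnext⟩⟩

theorem lstep_exists (E : ModuleCat.{u} R) (hE : IsExtG 𝒳 E) :
    Nonempty (LStepData 𝒳 E) := by
  classical
  obtain ⟨A, C, i, g, hA, hC, hi, hg, hex⟩ := hE
  obtain ⟨QA, Am, jAm, qA, hQAproj, hAm, hjAm, hqA, hexA⟩ := gp_left_shift hA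
  obtain ⟨QC, Cm, jCm, qC, hQCproj, hCm, hjCm, hqC, hexC⟩ := gp_left_shift hC
  letI := hQAproj
  letI := hQCproj
  obtain ⟨l, hl⟩ := Module.projective_lifting_property g qC hg
  have hlap : ∀ y, g (l y) = qC y := fun y =>
    congrFun (congrArg (fun (q : ↑QC →ₗ[R] ↑C) => (q : ↑QC → ↑C)) hl) y
  set π : ModuleCat.of R (QA × QC) →ₗ[R] E := LinearMap.coprod (i ∘ₗ qA) l with hπdef
  have hπap : ∀ x y, π (x, y) = i (qA x) + l y := fun x y => rfl
  have hπs : Surjective π := by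
    intro e
    obtain ⟨y, hy⟩ := hqC (g e)
    have : g (e - l y) = 0 := by rw [map_sub, hlap, hy, sub_self]
    obtain ⟨a, ha⟩ := (hex _).mp this
    obtain ⟨x, hx⟩ := hqA a
    refine ⟨(x, y), ?_⟩
    show i (qA x) + l y = e
    rw [hx, ha]
    abel
  have hexπ : Exact ((LinearMap.ker π).subtype) π := by
    intro p
    constructor
    · intro hp
      exact ⟨⟨p, hp⟩, rfl⟩
    · rintro ⟨⟨p', hp'⟩, rfl⟩
      exact hp'
  -- the kernel is an extension of Am by Cm
  have hmem1 : ∀ am : Am, ((jAm am, (0:QC)) : QA × QC) ∈ LinearMap.ker π := by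
    intro am
    rw [LinearMap.mem_ker]
    show i (qA (jAm am)) + l 0 = 0
    have h5 : qA (jAm am) = 0 := (hexA (jAm am)).mpr ⟨am, rfl⟩
    rw [h5, map_zero, map_zero, add_zero]
  have hmem2 : ∀ k : LinearMap.ker π, (k.1).2 ∈ LinearMap.range jCm := by
    rintro ⟨⟨x, y⟩, hk⟩
    have hk' : i (qA x) + l y = 0 := hk
    have hqCy : qC y = 0 := by
      have h1 : g (i (qA x) + l y) = 0 := by rw [hk', map_zero]
      rw [map_add, (hex (i (qA x))).mpr ⟨qA x, rfl⟩, zero_add, hlap] at h1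
      exact h1
    have h6 : y ∈ LinearMap.ker qC := hqCy
    rw [LinearMap.exact_iff.mp hexC] at h6
    exact h6
  set m : Am →ₗ[R] ModuleCat.of R (LinearMap.ker π) :=
    LinearMap.codRestrict (LinearMap.ker π)
      ((LinearMap.inl R QA QC) ∘ₗ jAm) (fun am => hmem1 am) with hm
  set q : ModuleCat.of R (LinearMap.ker π) →ₗ[R] Cm :=
    ((LinearEquiv.ofInjective jCm hjCm).symm : LinearMap.range jCm →ₗ[R] Cm) ∘ₗ
      LinearMap.codRestrict (LinearMap.range jCm)
        ((LinearMap.snd R QA QC) ∘ₗ (LinearMap.ker π).subtype) hmem2 with hq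
  have hjq : ∀ k : LinearMap.ker π, jCm (q k) = (k.1).2 := by
    intro k
    have h3 : jCm ((LinearEquiv.ofInjective jCm hjCm).symm ⟨(k.1).2, hmem2 k⟩)
        = ((LinearEquiv.ofInjective jCm hjCm) ((LinearEquiv.ofInjective jCm hjCm).symm
            ⟨(k.1).2, hmem2 k⟩)).1 := rfl
    rw [(LinearEquiv.ofInjective jCm hjCm).apply_symm_apply] at h3
    exact h3
  have hK : IsExtG 𝒳 (ModuleCat.of R (LinearMap.ker π)) := by
    refine ⟨Am, Cm, m, q, hAm, hCm, ?_, ?_, ?_⟩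
    · intro a₁ a₂ h
      apply hjAm
      exact congrArg (fun z => (Subtype.val z).1) h
    · intro cm
      have hqCy : qC (jCm cm) = 0 := (hexC (jCm cm)).mpr ⟨cm, rfl⟩
      have : g (l (jCm cm)) = 0 := by rw [hlap, hqCy]
      obtain ⟨a, ha⟩ := (hex _).mp this
      obtain ⟨x, hx⟩ := hqA a
      have hk : ((-x, jCm cm) : QA × QC) ∈ LinearMap.ker π := by
        rw [LinearMap.mem_ker]
        show i (qA (-x)) + l (jCm cm) = 0
        rw [map_neg, hx, map_neg, ha]
        abel
      refine ⟨⟨(-x, jCm cm), hk⟩, ?_⟩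
      apply hjCm
      exact (hjq _).trans rfl
    · intro k
      constructor
      · intro hk
        have h2 : (k.1).2 = 0 := by
          rw [← hjq k, hk, map_zero]
        have h0 : i (qA (k.1).1) + l ((k.1).2) = 0 := k.2
        rw [h2, map_zero, add_zero] at h0
        have hqa : qA (k.1).1 = 0 := by
          apply hi
          rw [h0, map_zero]
        obtain ⟨am, ham⟩ := (hexA _).mp hqa
        refine ⟨am, ?_⟩
        apply Subtype.ext
        show ((jAm am, (0:QC)) : QA × QC) = k.1
        exact Prod.ext ham h2.symm
      · rintro ⟨am, hamk⟩
        rw [← hamk]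
        apply hjCm
        rw [map_zero]
        exact hjq (m am)
  exact ⟨⟨ModuleCat.of R (QA × QC), ModuleCat.of R (LinearMap.ker π),
    (LinearMap.ker π).subtype, π, (inferInstance : Module.Projective R (↑QA × ↑QC)),
    (LinearMap.ker π).injective_subtype, hπs, hexπ, hK⟩⟩

noncomputable def rstep (h𝒳 : ∀ P : ModuleCat.{u} R, Module.Projective R P → 𝒳 P)
    (E : ModuleCat.{u} R) (hE : IsExtG 𝒳 E) : RStepData 𝒳 E :=
  Classical.choice (rstep_exists h𝒳 E hE)

noncomputable def lstep (E : ModuleCat.{u} R) (hE : IsExtG 𝒳 E) : LStepData 𝒳 E :=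
  Classical.choice (lstep_exists E hE)

end ExtensionClosure


section Glue
variable (h𝒳 : ∀ P : ModuleCat.{u} R, Module.Projective R P → 𝒳 P)
variable (E₀ : ModuleCat.{u} R) (h₀ : IsExtG 𝒳 E₀)

noncomputable def RT : ℕ → (E : ModuleCat.{u} R) ×' IsExtG 𝒳 E
  | 0 => ⟨E₀, h₀⟩
  | n+1 => ⟨(rstep h𝒳 (RT n).1 (RT n).2).next, (rstep h𝒳 (RT n).1 (RT n).2).hnext⟩

noncomputable def RS (n : ℕ) : RStepData 𝒳 (RT h𝒳 E₀ h₀ n).1 :=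
  rstep h𝒳 (RT h𝒳 E₀ h₀ n).1 (RT h𝒳 E₀ h₀ n).2

noncomputable def LT : ℕ → (E : ModuleCat.{u} R) ×' IsExtG 𝒳 E
  | 0 => ⟨E₀, h₀⟩
  | n+1 => ⟨(lstep (LT n).1 (LT n).2).K, (lstep (LT n).1 (LT n).2).hK⟩

noncomputable def LS (n : ℕ) : LStepData 𝒳 (LT E₀ h₀ n).1 :=
  lstep (LT E₀ h₀ n).1 (LT E₀ h₀ n).2

noncomputable def glueP : ℤ → ModuleCat.{u} R
  | .ofNat k => (RS h𝒳 E₀ h₀ k).P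
  | .negSucc k => (LS E₀ h₀ k).P

noncomputable def glueD : ∀ n : ℤ, glueP h𝒳 E₀ h₀ n →ₗ[R] glueP h𝒳 E₀ h₀ (n+1)
  | .ofNat k => (RS h𝒳 E₀ h₀ (k+1)).ι ∘ₗ (RS h𝒳 E₀ h₀ k).π
  | .negSucc 0 => (RS h𝒳 E₀ h₀ 0).ι ∘ₗ (LS E₀ h₀ 0).π
  | .negSucc (k+1) => (LS E₀ h₀ k).ι ∘ₗ (LS E₀ h₀ (k+1)).π

theorem glue_exact : ∀ n : ℤ,
    Exact (glueD h𝒳 E₀ h₀ n) (glueD h𝒳 E₀ h₀ (n+1)) := by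
  intro n
  match n with
  | .ofNat k =>
    exact spliceExact _ _ _ _ (RS h𝒳 E₀ h₀ k).hπ (RS h𝒳 E₀ h₀ (k+2)).hι
      (RS h𝒳 E₀ h₀ (k+1)).hex
  | .negSucc 0 =>
    exact spliceExact _ _ _ _ (LS E₀ h₀ 0).hπ (RS h𝒳 E₀ h₀ 1).hι (RS h𝒳 E₀ h₀ 0).hex
  | .negSucc 1 =>
    exact spliceExact _ _ _ _ (LS E₀ h₀ 1).hπ (RS h𝒳 E₀ h₀ 0).hι (LS E₀ h₀ 0).hex
  | .negSucc (k+2) =>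
    exact spliceExact _ _ _ _ (LS E₀ h₀ (k+2)).hπ (LS E₀ h₀ k).hι (LS E₀ h₀ (k+1)).hex

theorem glue_homExact : ∀ (Y : ModuleCat.{u} R), 𝒳 Y → ∀ n : ℤ,
    Exact (fun f : glueP h𝒳 E₀ h₀ (n+1+1) →ₗ[R] Y => f ∘ₗ glueD h𝒳 E₀ h₀ (n+1))
      (fun f : glueP h𝒳 E₀ h₀ (n+1) →ₗ[R] Y => f ∘ₗ glueD h𝒳 E₀ h₀ n) := by
  intro Y hY n
  match n with
  | .ofNat k =>
    exact spliceHomExact _ _ _ _ (RS h𝒳 E₀ h₀ k).hπ (RS h𝒳 E₀ h₀ (k+1)).hπ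
      (RS h𝒳 E₀ h₀ (k+1)).hex
      (fun φ => extendOfExtVanish (RS h𝒳 E₀ h₀ (k+2)).ι (RS h𝒳 E₀ h₀ (k+2)).π
        (RS h𝒳 E₀ h₀ (k+2)).hι (RS h𝒳 E₀ h₀ (k+2)).hπ (RS h𝒳 E₀ h₀ (k+2)).hex
        (extVanish_of_isExtG (RS h𝒳 E₀ h₀ (k+2)).hnext hY) φ)
  | .negSucc 0 =>
    exact spliceHomExact _ _ _ _ (LS E₀ h₀ 0).hπ (RS h𝒳 E₀ h₀ 0).hπ (RS h𝒳 E₀ h₀ 0).hex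
      (fun φ => extendOfExtVanish (RS h𝒳 E₀ h₀ 1).ι (RS h𝒳 E₀ h₀ 1).π
        (RS h𝒳 E₀ h₀ 1).hι (RS h𝒳 E₀ h₀ 1).hπ (RS h𝒳 E₀ h₀ 1).hex
        (extVanish_of_isExtG (RS h𝒳 E₀ h₀ 1).hnext hY) φ)
  | .negSucc 1 =>
    exact spliceHomExact _ _ _ _ (LS E₀ h₀ 1).hπ (LS E₀ h₀ 0).hπ (LS E₀ h₀ 0).hex
      (fun φ => extendOfExtVanish (RS h𝒳 E₀ h₀ 0).ι (RS h𝒳 E₀ h₀ 0).π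
        (RS h𝒳 E₀ h₀ 0).hι (RS h𝒳 E₀ h₀ 0).hπ (RS h𝒳 E₀ h₀ 0).hex
        (extVanish_of_isExtG (RS h𝒳 E₀ h₀ 0).hnext hY) φ)
  | .negSucc (k+2) =>
    exact spliceHomExact _ _ _ _ (LS E₀ h₀ (k+2)).hπ (LS E₀ h₀ (k+1)).hπ
      (LS E₀ h₀ (k+1)).hex
      (fun φ => extendOfExtVanish (LS E₀ h₀ k).ι (LS E₀ h₀ k).π
        (LS E₀ h₀ k).hι (LS E₀ h₀ k).hπ (LS E₀ h₀ k).hex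
        (extVanish_of_isExtG (LT E₀ h₀ k).2 hY) φ)

noncomputable def glueXCR : XCompleteResolution R 𝒳 where
  P := glueP h𝒳 E₀ h₀
  d := glueD h𝒳 E₀ h₀
  projective n := by
    match n with
    | .ofNat k => exact (RS h𝒳 E₀ h₀ k).proj
    | .negSucc k => exact (LS E₀ h₀ k).proj
  exact := glue_exact h𝒳 E₀ h₀
  homExact := glue_homExact h𝒳 E₀ h₀

include h𝒳 in
/-- extensions of Gorenstein projectives are Gorenstein projective. -/
theorem gp_of_isExtG {E : ModuleCat.{u} R} (hE : IsExtG 𝒳 E) :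
    XGorensteinProjective R 𝒳 E := by
  refine ⟨glueXCR h𝒳 E hE, ⟨?_⟩⟩
  have hker : LinearMap.ker (glueD h𝒳 E hE (0:ℤ))
      = LinearMap.range (RS h𝒳 E hE 0).ι := by
    ext x
    rw [LinearMap.mem_ker]
    constructor
    · intro hx
      have hx' : (RS h𝒳 E hE 1).ι ((RS h𝒳 E hE 0).π x) = 0 := hx
      have hπx : (RS h𝒳 E hE 0).π x = 0 := by
        apply (RS h𝒳 E hE 1).hι
        rw [hx']
        exact (map_zero (RS h𝒳 E hE 1).ι).symm
      obtain ⟨y, hy⟩ := ((RS h𝒳 E hE 0).hex x).mp hπx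
      exact ⟨y, hy⟩
    · rintro ⟨y, rfl⟩
      show (RS h𝒳 E hE 1).ι ((RS h𝒳 E hE 0).π ((RS h𝒳 E hE 0).ι y)) = 0
      rw [(RS h𝒳 E hE 0).hex.apply_apply_eq_zero y]
      exact map_zero (RS h𝒳 E hE 1).ι
  exact (LinearEquiv.ofInjective (RS h𝒳 E hE 0).ι (RS h𝒳 E hE 0).hι).trans
    (LinearEquiv.ofEq _ _ hker.symm)

include h𝒳 in
/-- The class of X-Gorenstein projectives is closed under extensions. -/
theorem gp_extension {A E C : ModuleCat.{u} R} (i : A →ₗ[R] E) (g : E →ₗ[R] C)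
    (hi : Injective i) (hg : Surjective g) (hex : Exact i g)
    (hA : XGorensteinProjective R 𝒳 A) (hC : XGorensteinProjective R 𝒳 C) :
    XGorensteinProjective R 𝒳 E :=
  gp_of_isExtG h𝒳 ⟨A, C, i, g, hA, hC, hi, hg, hex⟩

end Glue


section FinMachine
variable (𝒳)

/-- Finite X-Gorenstein projective dimension. -/
def FinG (M : ModuleCat.{u} R) : Prop :=
  ∃ (m : ℕ) (K : ModuleCat.{u} R), XGorensteinProjective R 𝒳 K ∧
    ResWithKernel R (XGorensteinProjective R 𝒳) m K M

variable {𝒳}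

theorem rwk_congr {M M' K : ModuleCat.{u} R} (e : M ≃ₗ[R] M') :
    ∀ m, ResWithKernel R (XGorensteinProjective R 𝒳) m K M →
      ResWithKernel R (XGorensteinProjective R 𝒳) m K M' := by
  intro m h
  match m, h with
  | 0, ⟨e₀⟩ => exact ⟨e₀.trans e⟩
  | m+1, ⟨G, L, f, g, hG, hf, hg, hfg, hr⟩ =>
    refine ⟨G, L, f, (e : M →ₗ[R] M') ∘ₗ g, hG, hf, e.surjective.comp hg, ?_, hr⟩
    intro y
    rw [LinearMap.comp_apply]
    constructor
    · intro hy
      have : g y = 0 := by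
        apply e.injective
        simpa using hy
      exact (hfg y).mp this
    · intro hy
      have : g y = 0 := (hfg y).mpr hy
      rw [this, map_zero]

theorem fin_of_equiv {M M' : ModuleCat.{u} R} (e : M ≃ₗ[R] M') (h : FinG 𝒳 M) :
    FinG 𝒳 M' := by
  obtain ⟨m, K, hK, hr⟩ := h
  exact ⟨m, K, hK, rwk_congr e m hr⟩

theorem fin_of_gp {G : ModuleCat.{u} R} (hG : XGorensteinProjective R 𝒳 G) : FinG 𝒳 G :=
  ⟨0, G, hG, ⟨LinearEquiv.refl R G⟩⟩

/-- Splicing : kernel Fin, middle GP gives quotient Fin (one step longer). -/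
theorem fin_quotient_of_gp {Y G₀ B : ModuleCat.{u} R} (ι : Y →ₗ[R] G₀) (π : G₀ →ₗ[R] B)
    (hι : Injective ι) (hπ : Surjective π) (hex : Exact ι π)
    (hG₀ : XGorensteinProjective R 𝒳 G₀) (hY : FinG 𝒳 Y) : FinG 𝒳 B := by
  obtain ⟨m, K, hK, hr⟩ := hY
  exact ⟨m+1, K, hK, ⟨G₀, Y, ι, π, hG₀, hι, hπ, hex, hr⟩⟩

theorem exists_cover_of_fin {M : ModuleCat.{u} R} (hM : FinG 𝒳 M) :
    ∃ (L G : ModuleCat.{u} R) (ι : L →ₗ[R] G) (π : G →ₗ[R] M),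
      XGorensteinProjective R 𝒳 G ∧ FinG 𝒳 L ∧ Injective ι ∧ Surjective π ∧ Exact ι π := by
  obtain ⟨m, K, hK, hr⟩ := hM
  match m, hr with
  | 0, ⟨e⟩ =>
    refine ⟨ModuleCat.of R PUnit.{u+1}, K, 0, (e : K →ₗ[R] M), hK, fin_of_gp gp_zero,
      fun a b _ => Subsingleton.elim a b, e.surjective, ?_⟩
    intro y
    constructor
    · intro hy
      exact ⟨0, by simpa using (e.map_eq_zero_iff.mp hy).symm⟩
    · rintro ⟨z, hz⟩
      rw [← hz]
      show (e : K →ₗ[R] M) ((0 : ↑(ModuleCat.of R PUnit.{u+1}) →ₗ[R] K) z) = 0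
      rw [LinearMap.zero_apply, map_zero]
  | m+1, ⟨G, L, f, g, hG, hf, hg, hfg, hr'⟩ =>
    exact ⟨L, G, f, g, hG, ⟨m, K, hK, hr'⟩, hf, hg, hfg⟩

/-- Product with a Gorenstein projective preserves finiteness (with the same length). -/
theorem rwk_prod_gp (h𝒳 : ∀ P : ModuleCat.{u} R, Module.Projective R P → 𝒳 P)
    {G : ModuleCat.{u} R} (hG : XGorensteinProjective R 𝒳 G) :
    ∀ (m : ℕ) {M K : ModuleCat.{u} R}, XGorensteinProjective R 𝒳 K →
      ResWithKernel R (XGorensteinProjective R 𝒳) m K M →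
      ∃ K', XGorensteinProjective R 𝒳 K' ∧
        ResWithKernel R (XGorensteinProjective R 𝒳) m K' (ModuleCat.of R (M × G)) := by
  intro m M K hK hr
  have hexMG : ∀ (M₁ : ModuleCat.{u} R), Exact (LinearMap.inl R M₁ G) (LinearMap.snd R M₁ G) := by
    intro M₁ z
    constructor
    · intro hz
      exact ⟨z.1, by
        apply Prod.ext
        · rfl
        · exact hz.symm⟩
    · rintro ⟨x, rfl⟩
      rfl
  match m, hr with
  | 0, ⟨e⟩ =>
    have hMgp : XGorensteinProjective R 𝒳 M := gp_of_equiv e hK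
    have : XGorensteinProjective R 𝒳 (ModuleCat.of R (M × G)) :=
      gp_extension h𝒳 (LinearMap.inl R M G) (LinearMap.snd R M G)
        LinearMap.inl_injective (fun y => ⟨(0, y), rfl⟩) (hexMG M) hMgp hG
    exact ⟨ModuleCat.of R (M × G), this, ⟨LinearEquiv.refl R _⟩⟩
  | m+1, ⟨G₀, L, f, g, hG₀, hf, hg, hfg, hr'⟩ =>
    have hgpG₀ : XGorensteinProjective R 𝒳 (ModuleCat.of R (G₀ × G)) :=
      gp_extension h𝒳 (LinearMap.inl R G₀ G) (LinearMap.snd R G₀ G)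
        LinearMap.inl_injective (fun y => ⟨(0, y), rfl⟩) (hexMG G₀) hG₀ hG
    refine ⟨K, hK, ModuleCat.of R (G₀ × G), L, (LinearMap.inl R G₀ G) ∘ₗ f,
      LinearMap.prodMap g LinearMap.id, hgpG₀, LinearMap.inl_injective.comp hf, ?_, ?_, hr'⟩
    · rintro ⟨x, y⟩
      obtain ⟨x', hx'⟩ := hg x
      refine ⟨(x', y), ?_⟩
      apply Prod.ext
      · exact hx'
      · rfl
    · rintro ⟨x, y⟩
      constructor
      · intro hz
        have h1 : g x = 0 := congrArg Prod.fst hz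
        have h2 : y = 0 := congrArg Prod.snd hz
        obtain ⟨a, ha⟩ := (hfg x).mp h1
        exact ⟨a, by
          apply Prod.ext
          · exact ha
          · exact h2.symm⟩
      · rintro ⟨a, ha⟩
        have hx : f a = x := congrArg Prod.fst ha
        have hy : (0:G) = y := congrArg Prod.snd ha
        apply Prod.ext
        · show g x = 0
          rw [← hx]
          exact (hfg _).mpr ⟨a, rfl⟩
        · show (LinearMap.id : ↑G →ₗ[R] ↑G) y = (0 : ↑G)
          rw [← hy]
          rfl

theorem fin_prod_gp (h𝒳 : ∀ P : ModuleCat.{u} R, Module.Projective R P → 𝒳 P)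
    {M G : ModuleCat.{u} R} (hM : FinG 𝒳 M) (hG : XGorensteinProjective R 𝒳 G) :
    FinG 𝒳 (ModuleCat.of R (M × G)) := by
  obtain ⟨m, K, hK, hr⟩ := hM
  obtain ⟨K', hK', hr'⟩ := rwk_prod_gp h𝒳 hG m hK hr
  exact ⟨m, K', hK', hr'⟩

end FinMachine


section Packages

/-- Pullback of two surjections onto `C`, with both induced short exact sequences. -/
theorem pullback_package {B C G A L : ModuleCat.{u} R}
    (g : B →ₗ[R] C) (p : G →ₗ[R] C) (hg : Surjective g) (hp : Surjective p)
    (f : A →ₗ[R] B) (hf : Injective f) (hfg : Exact f g)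
    (ι : L →ₗ[R] G) (hι : Injective ι) (hιp : Exact ι p) :
    ∃ (X : ModuleCat.{u} R) (kA : A →ₗ[R] X) (prG : X →ₗ[R] G)
      (kL : L →ₗ[R] X) (prB : X →ₗ[R] B),
      Injective kA ∧ Surjective prG ∧ Exact kA prG ∧
      Injective kL ∧ Surjective prB ∧ Exact kL prB := by
  classical
  set D : (ModuleCat.of R (B × G)) →ₗ[R] C :=
    (g ∘ₗ LinearMap.fst R B G) - (p ∘ₗ LinearMap.snd R B G) with hD
  have hmemD : ∀ z : B × G, z ∈ LinearMap.ker D ↔ g z.1 = p z.2 := by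
    intro z
    rw [LinearMap.mem_ker]
    constructor
    · intro hz
      have : g z.1 - p z.2 = 0 := hz
      exact sub_eq_zero.mp this
    · intro hz
      show g z.1 - p z.2 = 0
      rw [hz, sub_self]
  have hmemA : ∀ a : A, ((f a, (0:G)) : B × G) ∈ LinearMap.ker D := by
    intro a
    rw [hmemD]
    show g (f a) = p 0
    rw [(hfg (f a)).mpr ⟨a, rfl⟩, map_zero]
  have hmemL : ∀ l : L, (((0:B), ι l) : B × G) ∈ LinearMap.ker D := by
    intro l
    rw [hmemD]
    show g 0 = p (ι l)
    rw [map_zero, (hιp (ι l)).mpr ⟨l, rfl⟩]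
  refine ⟨ModuleCat.of R (LinearMap.ker D),
    LinearMap.codRestrict (LinearMap.ker D)
      ((LinearMap.inl R B G) ∘ₗ f) (fun a => hmemA a),
    (LinearMap.snd R B G) ∘ₗ (LinearMap.ker D).subtype,
    LinearMap.codRestrict (LinearMap.ker D)
      ((LinearMap.inr R B G) ∘ₗ ι) (fun l => hmemL l),
    (LinearMap.fst R B G) ∘ₗ (LinearMap.ker D).subtype,
    ?_, ?_, ?_, ?_, ?_, ?_⟩
  · intro a₁ a₂ h
    apply hf
    exact congrArg (fun z => (Subtype.val z).1) h
  · intro x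
    obtain ⟨b, hb⟩ := hg (p x)
    exact ⟨⟨(b, x), (hmemD (b, x)).mpr hb⟩, rfl⟩
  · rintro ⟨⟨b, x⟩, hz⟩
    constructor
    · intro hx
      have hx0 : x = 0 := hx
      have hb : g b = 0 := by
        have := (hmemD (b, x)).mp hz
        rw [hx0, map_zero] at this
        exact this
      obtain ⟨a, ha⟩ := (hfg b).mp hb
      exact ⟨a, Subtype.ext (Prod.ext ha hx0.symm)⟩
    · rintro ⟨a, ha⟩
      have h5 := congrArg (fun z => (Subtype.val z).2) ha
      exact h5.symm
  · intro l₁ l₂ h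
    apply hι
    exact congrArg (fun z => (Subtype.val z).2) h
  · intro b
    obtain ⟨x, hx⟩ := hp (g b)
    exact ⟨⟨(b, x), (hmemD (b, x)).mpr hx.symm⟩, rfl⟩
  · rintro ⟨⟨b, x⟩, hz⟩
    constructor
    · intro hb
      have hb0 : b = 0 := hb
      have hx : p x = 0 := by
        have := (hmemD (b, x)).mp hz
        rw [hb0, map_zero] at this
        exact this.symm
      obtain ⟨l, hl⟩ := (hιp x).mp hx
      exact ⟨l, Subtype.ext (Prod.ext hb0.symm hl)⟩
    · rintro ⟨l, hl⟩
      have h5 := congrArg (fun z => (Subtype.val z).1) hl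
      exact h5.symm

/-- Preimage of a submodule (given by a SES) under a surjection. -/
theorem preimage_package {A B C D L : ModuleCat.{u} R}
    (f : A →ₗ[R] B) (g : B →ₗ[R] C) (hf : Injective f) (hg : Surjective g)
    (hfg : Exact f g)
    (v : L →ₗ[R] D) (w : D →ₗ[R] B) (hv : Injective v) (hw : Surjective w)
    (hvw : Exact v w) :
    ∃ (Y : ModuleCat.{u} R) (jL : L →ₗ[R] Y) (ρ : Y →ₗ[R] A) (ιY : Y →ₗ[R] D),
      Injective jL ∧ Surjective ρ ∧ Exact jL ρ ∧
      Injective ιY ∧ Surjective (g ∘ₗ w) ∧ Exact ιY (g ∘ₗ w) := by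
  classical
  have hmemL : ∀ l : L, v l ∈ LinearMap.ker (g ∘ₗ w) := by
    intro l
    rw [LinearMap.mem_ker, LinearMap.comp_apply]
    rw [(hvw (v l)).mpr ⟨l, rfl⟩, map_zero]
  have hmemρ : ∀ y : LinearMap.ker (g ∘ₗ w), w y.1 ∈ LinearMap.range f := by
    rintro ⟨d, hd⟩
    rw [LinearMap.mem_ker, LinearMap.comp_apply] at hd
    exact (hfg (w d)).mp hd
  set ρ : ModuleCat.of R (LinearMap.ker (g ∘ₗ w)) →ₗ[R] A :=
    ((LinearEquiv.ofInjective f hf).symm : LinearMap.range f →ₗ[R] A) ∘ₗ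
      LinearMap.codRestrict (LinearMap.range f)
        (w ∘ₗ (LinearMap.ker (g ∘ₗ w)).subtype) hmemρ with hρ
  have hfρ : ∀ y : LinearMap.ker (g ∘ₗ w), f (ρ y) = w y.1 := by
    intro y
    have h3 : f ((LinearEquiv.ofInjective f hf).symm ⟨w y.1, hmemρ y⟩)
        = ((LinearEquiv.ofInjective f hf) ((LinearEquiv.ofInjective f hf).symm
            ⟨w y.1, hmemρ y⟩)).1 := rfl
    rw [(LinearEquiv.ofInjective f hf).apply_symm_apply] at h3
    exact h3
  refine ⟨ModuleCat.of R (LinearMap.ker (g ∘ₗ w)),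
    LinearMap.codRestrict (LinearMap.ker (g ∘ₗ w)) v (fun l => hmemL l), ρ,
    (LinearMap.ker (g ∘ₗ w)).subtype, ?_, ?_, ?_,
    (LinearMap.ker (g ∘ₗ w)).injective_subtype, hg.comp hw, ?_⟩
  · intro l₁ l₂ h
    apply hv
    exact congrArg Subtype.val h
  · intro a
    obtain ⟨d, hd⟩ := hw (f a)
    have hdY : d ∈ LinearMap.ker (g ∘ₗ w) := by
      rw [LinearMap.mem_ker, LinearMap.comp_apply, hd]
      exact (hfg (f a)).mpr ⟨a, rfl⟩
    refine ⟨⟨d, hdY⟩, ?_⟩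
    apply hf
    rw [hfρ ⟨d, hdY⟩]
    exact hd
  · intro y
    constructor
    · intro hy
      have hwy : w y.1 = 0 := by
        rw [← hfρ y, hy, map_zero]
      obtain ⟨l, hl⟩ := (hvw y.1).mp hwy
      exact ⟨l, Subtype.ext hl⟩
    · rintro ⟨l, hl⟩
      apply hf
      rw [hfρ, ← hl]
      show w ((LinearMap.codRestrict (LinearMap.ker (g ∘ₗ w)) v
        (fun l => hmemL l)) l).1 = f 0
      rw [map_zero]
      show w (v l) = (0 : ↑B)
      rw [(hvw (v l)).mpr ⟨l, rfl⟩]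
  · intro d
    constructor
    · intro hd
      exact ⟨⟨d, hd⟩, rfl⟩
    · rintro ⟨y, rfl⟩
      exact y.2

end Packages


section MainInduction
variable (𝒳)

def F1bP (m : ℕ) : Prop := ∀ ⦃G E B : ModuleCat.{u} R⦄ (ι : G →ₗ[R] E) (π : E →ₗ[R] B),
  Injective ι → Surjective π → Exact ι π → XGorensteinProjective R 𝒳 G →
  (∃ K, XGorensteinProjective R 𝒳 K ∧ ResWithKernel R (XGorensteinProjective R 𝒳) m K E) →
  FinG 𝒳 B

def F1aP (m : ℕ) : Prop := ∀ ⦃A B C' : ModuleCat.{u} R⦄ (f : A →ₗ[R] B) (g : B →ₗ[R] C'),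
  Injective f → Surjective g → Exact f g → XGorensteinProjective R 𝒳 C' →
  (∃ K, XGorensteinProjective R 𝒳 K ∧ ResWithKernel R (XGorensteinProjective R 𝒳) m K A) →
  FinG 𝒳 B

variable {𝒳}
variable (h𝒳 : ∀ P : ModuleCat.{u} R, Module.Projective R P → 𝒳 P)

include h𝒳 in
theorem F1a_of_F1b (m : ℕ) (hF1b : F1bP 𝒳 m) : F1aP 𝒳 m := by
  rintro A B C' f g hf hg hfg hC' ⟨K, hK, hrA⟩
  obtain ⟨Q, Cm, jCm, p, hQproj, hCm, hjCm, hp, hexC⟩ := gp_left_shift hC'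
  obtain ⟨X, kA, prQ, kCm, prB, hkA, hprQ, hexQ, hkCm, hprB, hexB⟩ :=
    pullback_package g p hg hp f hf hfg jCm hjCm hexC
  letI := hQproj
  obtain ⟨sQ, hsQ⟩ := sectionOfSurjective prQ hprQ
  have eX : (↑A × ↑Q) ≃ₗ[R] ↑X := splitEquiv kA prQ hkA hexQ sQ hsQ
  obtain ⟨K', hK', hr'⟩ := rwk_prod_gp h𝒳 (gp_of_projective Q hQproj) m hK hrA
  have hrX : ResWithKernel R (XGorensteinProjective R 𝒳) m K' X :=
    rwk_congr (M := ModuleCat.of R (↑A × ↑Q)) (M' := X) eX m hr'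
  exact hF1b kCm prB hkCm hprB hexB hCm ⟨K', hK', hrX⟩

theorem F1b_succ (m : ℕ) (hF1a : F1aP 𝒳 m) : F1bP 𝒳 (m+1) := by
  rintro G E B ι π hι hπ hex hG ⟨K, hK, hrE⟩
  obtain ⟨G₀, L, v, w, hG₀, hv, hw, hvw, hrL⟩ := hrE
  obtain ⟨Y, jL, ρ, ιY, hjL, hρ, hexjLρ, hιY, hSurj, hexY⟩ :=
    preimage_package ι π hι hπ hex v w hv hw hvw
  have hYfin : FinG 𝒳 Y := hF1a jL ρ hjL hρ hexjLρ hG ⟨K, hK, hrL⟩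
  exact fin_quotient_of_gp ιY (π ∘ₗ w) hιY hSurj hexY hG₀ hYfin

include h𝒳 in
theorem F1ab : ∀ m, F1bP 𝒳 m ∧ F1aP 𝒳 m := by
  intro m
  induction m with
  | zero =>
    have hb : F1bP 𝒳 0 := by
      rintro G E B ι π hι hπ hex hG ⟨K, hK, hr⟩
      obtain ⟨e⟩ := hr
      have hEgp : XGorensteinProjective R 𝒳 E := gp_of_equiv e hK
      exact ⟨1, G, hG, ⟨E, G, ι, π, hEgp, hι, hπ, hex, ⟨LinearEquiv.refl R G⟩⟩⟩
    exact ⟨hb, F1a_of_F1b h𝒳 0 hb⟩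
  | succ m ih =>
    have hb : F1bP 𝒳 (m+1) := F1b_succ m ih.2
    exact ⟨hb, F1a_of_F1b h𝒳 (m+1) hb⟩

include h𝒳 in
/-- middle of an extension: sub Gorenstein projective, quotient finite dimension. -/
theorem fin_mid_of_sub_gp {Gm V E : ModuleCat.{u} R} (ι : Gm →ₗ[R] V) (q : V →ₗ[R] E)
    (hι : Injective ι) (hq : Surjective q) (hex : Exact ι q)
    (hGm : XGorensteinProjective R 𝒳 Gm) (hE : FinG 𝒳 E) : FinG 𝒳 V := by
  obtain ⟨m, K, hK, hrE⟩ := hE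
  match m, hrE with
  | 0, ⟨e⟩ =>
    have hEgp : XGorensteinProjective R 𝒳 E := gp_of_equiv e hK
    exact fin_of_gp (gp_extension h𝒳 ι q hι hq hex hGm hEgp)
  | m+1, ⟨G₀, L, v, w, hG₀, hv, hw, hvw, hrL⟩ =>
    obtain ⟨W, kGm, prG₀, kL, prV, hkGm, hprG₀, hexG₀, hkL, hprV, hexV⟩ :=
      pullback_package q w hq hw ι hι hex v hv hvw
    have hWgp : XGorensteinProjective R 𝒳 W :=
      gp_extension h𝒳 kGm prG₀ hkGm hprG₀ hexG₀ hGm hG₀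
    exact fin_quotient_of_gp kL prV hkL hprV hexV hWgp ⟨m, K, hK, hrL⟩

include h𝒳 in
/-- A direct summand with projective complement of a finite-dimension module. -/
theorem fin_summand_proj {K P : ModuleCat.{u} R} (hP : Module.Projective R P)
    (h : FinG 𝒳 (ModuleCat.of R (↑K × ↑P))) : FinG 𝒳 K := by
  obtain ⟨L, G₀, v, w, hG₀, hL, hv, hw, hvw⟩ := exists_cover_of_fin h
  have hinr : Injective (LinearMap.inr R K P) := LinearMap.inr_injective
  have hfstsurj : Surjective (LinearMap.fst R K P) := fun k => ⟨(k, 0), rfl⟩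
  have hexrf : Exact (LinearMap.inr R K P) (LinearMap.fst R K P) := by
    rintro ⟨k, p⟩
    constructor
    · intro hk
      have hk0 : k = 0 := hk
      exact ⟨p, by rw [hk0]; rfl⟩
    · rintro ⟨p', hp'⟩
      have h7 := congrArg Prod.fst hp'
      exact h7.symm
  obtain ⟨Y, jL, ρ, ιY, hjL, hρ, hexjLρ, hιY, hSurj, hexY⟩ :=
    preimage_package (LinearMap.inr R K P) (LinearMap.fst R K P) hinr hfstsurj hexrf
      v w hv hw hvw
  letI := hP
  obtain ⟨sP, hsP⟩ := sectionOfSurjective ρ hρ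
  have eY : (↑L × ↑P) ≃ₗ[R] ↑Y := splitEquiv jL ρ hjL hexjLρ sP hsP
  have hYfin : FinG 𝒳 Y :=
    fin_of_equiv (M := ModuleCat.of R (↑L × ↑P)) (M' := Y) eY
      (fin_prod_gp h𝒳 hL (gp_of_projective P hP))
  exact fin_quotient_of_gp ιY (LinearMap.fst R K P ∘ₗ w) hιY hSurj hexY hG₀ hYfin

include h𝒳 in
/-- Kernel of an epimorphism from finite dimension onto a Gorenstein projective. -/
theorem fin_ker_of_epi_gp {K E G' : ModuleCat.{u} R} (κ : K →ₗ[R] E) (q : E →ₗ[R] G')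
    (hκ : Injective κ) (hq : Surjective q) (hex : Exact κ q)
    (hE : FinG 𝒳 E) (hG' : XGorensteinProjective R 𝒳 G') : FinG 𝒳 K := by
  obtain ⟨Pq, Gm, jGm, p, hPqproj, hGm, hjGm, hp, hexG⟩ := gp_left_shift hG'
  obtain ⟨V, kK, prP, kGm, prE, hkK, hprP, hexP, hkGm, hprE, hexE⟩ :=
    pullback_package q p hq hp κ hκ hex jGm hjGm hexG
  have hVfin : FinG 𝒳 V := fin_mid_of_sub_gp h𝒳 kGm prE hkGm hprE hexE hGm hE
  letI := hPqproj
  obtain ⟨sV, hsV⟩ := sectionOfSurjective prP hprP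
  have eV : (↑K × ↑Pq) ≃ₗ[R] ↑V := splitEquiv kK prP hkK hexP sV hsV
  have hKP : FinG 𝒳 (ModuleCat.of R (↑K × ↑Pq)) :=
    fin_of_equiv (M := V) (M' := ModuleCat.of R (↑K × ↑Pq)) eV.symm hVfin
  exact fin_summand_proj h𝒳 hPqproj hKP

variable (𝒳) in
def F1P (k : ℕ) : Prop := ∀ ⦃A B C : ModuleCat.{u} R⦄ (f : A →ₗ[R] B) (g : B →ₗ[R] C),
  Injective f → Surjective g → Exact f g → FinG 𝒳 A →
  (∃ K, XGorensteinProjective R 𝒳 K ∧ ResWithKernel R (XGorensteinProjective R 𝒳) k K C) →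
  FinG 𝒳 B

variable (𝒳) in
def F3P (a : ℕ) : Prop := ∀ ⦃A B C : ModuleCat.{u} R⦄ (f : A →ₗ[R] B) (g : B →ₗ[R] C),
  Injective f → Surjective g → Exact f g →
  (∃ K, XGorensteinProjective R 𝒳 K ∧ ResWithKernel R (XGorensteinProjective R 𝒳) a K A) →
  FinG 𝒳 B → FinG 𝒳 C

theorem F3_of_F1 (a : ℕ) (hF1 : F1P 𝒳 a) : F3P 𝒳 a := by
  rintro A B C f g hf hg hfg hwA hB
  obtain ⟨LB, GB, v, w, hGB, hLB, hv, hw, hvw⟩ := exists_cover_of_fin hB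
  obtain ⟨Y, jL, ρ, ιY, hjL, hρ, hexjLρ, hιY, hSurj, hexY⟩ :=
    preimage_package f g hf hg hfg v w hv hw hvw
  have hYfin : FinG 𝒳 Y := hF1 jL ρ hjL hρ hexjLρ hLB hwA
  exact fin_quotient_of_gp ιY (g ∘ₗ w) hιY hSurj hexY hGB hYfin

include h𝒳 in
theorem F1F3 : ∀ n, F1P 𝒳 n ∧ F3P 𝒳 n := by
  intro n
  induction n with
  | zero =>
    have h1 : F1P 𝒳 0 := by
      rintro A B C f g hf hg hfg hA ⟨K, hK, hr⟩
      obtain ⟨e⟩ := hr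
      have hCgp : XGorensteinProjective R 𝒳 C := gp_of_equiv e hK
      obtain ⟨m, K', hK', hrA⟩ := hA
      exact (F1ab h𝒳 m).2 f g hf hg hfg hCgp ⟨K', hK', hrA⟩
    exact ⟨h1, F3_of_F1 0 h1⟩
  | succ n ih =>
    have h1 : F1P 𝒳 (n+1) := by
      rintro A B C f g hf hg hfg hA ⟨K, hK, hr⟩
      obtain ⟨G, L, v, p, hG, hv, hp, hvp, hrL⟩ := hr
      obtain ⟨X, kA, prG, kL, prB, hkA, hprG, hexG, hkL, hprB, hexB⟩ :=
        pullback_package g p hg hp f hf hfg v hv hvp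
      have hXfin : FinG 𝒳 X := by
        obtain ⟨m, K', hK', hrA⟩ := hA
        exact (F1ab h𝒳 m).2 kA prG hkA hprG hexG hG ⟨K', hK', hrA⟩
      exact ih.2 kL prB hkL hprB hexB ⟨K, hK, hrL⟩ hXfin
    exact ⟨h1, F3_of_F1 (n+1) h1⟩

include h𝒳 in
theorem finG_two_three_B {A B C : ModuleCat.{u} R} (f : A →ₗ[R] B) (g : B →ₗ[R] C)
    (hf : Injective f) (hg : Surjective g) (hfg : Exact f g)
    (hA : FinG 𝒳 A) (hC : FinG 𝒳 C) : FinG 𝒳 B := by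
  obtain ⟨k, K, hK, hr⟩ := hC
  exact (F1F3 h𝒳 k).1 f g hf hg hfg hA ⟨K, hK, hr⟩

include h𝒳 in
theorem finG_two_three_C {A B C : ModuleCat.{u} R} (f : A →ₗ[R] B) (g : B →ₗ[R] C)
    (hf : Injective f) (hg : Surjective g) (hfg : Exact f g)
    (hA : FinG 𝒳 A) (hB : FinG 𝒳 B) : FinG 𝒳 C := by
  obtain ⟨a, K, hK, hr⟩ := hA
  exact (F1F3 h𝒳 a).2 f g hf hg hfg ⟨K, hK, hr⟩ hB

include h𝒳 in
theorem finG_two_three_A {A B C : ModuleCat.{u} R} (f : A →ₗ[R] B) (g : B →ₗ[R] C)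
    (hf : Injective f) (hg : Surjective g) (hfg : Exact f g)
    (hB : FinG 𝒳 B) (hC : FinG 𝒳 C) : FinG 𝒳 A := by
  obtain ⟨L, G, v, p, hG, hL, hv, hp, hvp⟩ := exists_cover_of_fin hC
  obtain ⟨X, kA, prG, kL, prB, hkA, hprG, hexG, hkL, hprB, hexB⟩ :=
    pullback_package g p hg hp f hf hfg v hv hvp
  have hXfin : FinG 𝒳 X := finG_two_three_B h𝒳 kL prB hkL hprB hexB hL hB
  exact fin_ker_of_epi_gp h𝒳 kA prG hkA hprG hexG hXfin hG

end MainInduction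

theorem xGpd_ne_top_iff {M : ModuleCat.{u} R} : xGpd R 𝒳 M ≠ ⊤ ↔ FinG 𝒳 M := by
  constructor
  · intro h
    by_contra hF
    apply h
    have hS : {n : ℕ∞ | ∃ m : ℕ, n = m ∧ ∃ K, XGorensteinProjective R 𝒳 K ∧
        ResWithKernel R (XGorensteinProjective R 𝒳) m K M} = ∅ := by
      ext n
      simp only [Set.mem_empty_iff_false, iff_false, Set.mem_setOf_eq]
      rintro ⟨m, rfl, K, hK, hr⟩
      exact hF ⟨m, K, hK, hr⟩
    show relDim R (XGorensteinProjective R 𝒳) M = ⊤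
    unfold relDim
    rw [hS, sInf_empty]
  · rintro ⟨m, K, hK, hr⟩ h
    have hle : sInf {n : ℕ∞ | ∃ m : ℕ, n = m ∧ ∃ K, XGorensteinProjective R 𝒳 K ∧
        ResWithKernel R (XGorensteinProjective R 𝒳) m K M} ≤ (m : ℕ∞) :=
      sInf_le ⟨m, rfl, K, hK, hr⟩
    have hle' : xGpd R 𝒳 M ≤ (m : ℕ∞) := hle
    rw [h] at hle'
    have := top_le_iff.mp hle'
    simp at this

end GorensteinTwoOfThree

open GorensteinTwoOfThree in
/-- In a short exact sequence `0 → A → B → C → 0`, if two of `A`, `B`, `C` have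
finite `𝒳`-Gorenstein projective dimension, then so does the third. -/
theorem xGpd_finite_two_of_three
    (R : Type u) [Ring R] (𝒳 : ModuleCat.{u} R → Prop)
    (h𝒳 : ∀ P : ModuleCat.{u} R, Module.Projective R P → 𝒳 P)
    (A B C : ModuleCat.{u} R) (f : A →ₗ[R] B) (g : B →ₗ[R] C)
    (hf : Function.Injective f) (hg : Function.Surjective g)
    (hfg : Function.Exact f g) :
    (xGpd R 𝒳 A ≠ ⊤ → xGpd R 𝒳 C ≠ ⊤ → xGpd R 𝒳 B ≠ ⊤) ∧
    (xGpd R 𝒳 A ≠ ⊤ → xGpd R 𝒳 B ≠ ⊤ → xGpd R 𝒳 C ≠ ⊤) ∧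
    (xGpd R 𝒳 B ≠ ⊤ → xGpd R 𝒳 C ≠ ⊤ → xGpd R 𝒳 A ≠ ⊤) := by
  refine ⟨fun hA hC => ?_, fun hA hB => ?_, fun hB hC => ?_⟩
  · exact xGpd_ne_top_iff.mpr (finG_two_three_B h𝒳 f g hf hg hfg
      (xGpd_ne_top_iff.mp hA) (xGpd_ne_top_iff.mp hC))
  · exact xGpd_ne_top_iff.mpr (finG_two_three_C h𝒳 f g hf hg hfg
      (xGpd_ne_top_iff.mp hA) (xGpd_ne_top_iff.mp hB))
  · exact xGpd_ne_top_iff.mpr (finG_two_three_A h𝒳 f g hf hg hfg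
      (xGpd_ne_top_iff.mp hB) (xGpd_ne_top_iff.mp hC))
end

section
/- If M is a left R-module with finite X-Gorenstein projective dimension n ≥ 1, then there exists a short exact sequence 0 → K → G → M → 0 with G X-Gorenstein projective and pd(K) = n − 1. -/
open CategoryTheory DirectSum

universe u

namespace GpdAux
open Function LinearMap

variable {R : Type u} [Ring R]

section Helpers
variable {M N Y E X : Type u} [AddCommGroup M] [AddCommGroup N] [AddCommGroup Y]
  [AddCommGroup E] [AddCommGroup X]
  [Module R M] [Module R N] [Module R Y] [Module R E] [Module R X]

/-- Factor a linear map through a surjection whose kernel it kills. -/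
noncomputable def liftSurj (g : M →ₗ[R] N) (hg : Function.Surjective g)
    (f : M →ₗ[R] Y) (h : ∀ x, g x = 0 → f x = 0) : N →ₗ[R] Y where
  toFun n := f (Function.surjInv hg n)
  map_add' a b := by
    have h1 : g (Function.surjInv hg (a + b) - Function.surjInv hg a - Function.surjInv hg b) = 0 := by
      simp [Function.surjInv_eq hg]
    have h2 := h _ h1
    simp only [map_sub, sub_eq_zero] at h2
    show f (Function.surjInv hg (a + b)) = f (Function.surjInv hg a) + f (Function.surjInv hg b)
    rw [sub_eq_iff_eq_add] at h2
    rw [h2, add_comm]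
  map_smul' c a := by
    have h1 : g (Function.surjInv hg (c • a) - c • Function.surjInv hg a) = 0 := by
      simp [Function.surjInv_eq hg]
    have h2 := h _ h1
    simp only [map_sub, map_smul, sub_eq_zero] at h2
    simpa using h2

lemma liftSurj_apply (g : M →ₗ[R] N) (hg : Function.Surjective g)
    (f : M →ₗ[R] Y) (h : ∀ x, g x = 0 → f x = 0) (x : M) :
    liftSurj g hg f h (g x) = f x := by
  have h1 : g (Function.surjInv hg (g x) - x) = 0 := by
    simp [Function.surjInv_eq hg]
  have h2 := h _ h1
  simp only [map_sub, sub_eq_zero] at h2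
  exact h2

/-- Factor a linear map through an injection containing its range. -/
noncomputable def liftInj (ι : Y →ₗ[R] E) (hι : Function.Injective ι)
    (f : M →ₗ[R] E) (hf : ∀ x, f x ∈ Set.range ι) : M →ₗ[R] Y where
  toFun x := (hf x).choose
  map_add' a b := by
    apply hι
    calc ι ((hf (a + b)).choose) = f (a + b) := (hf (a + b)).choose_spec
      _ = f a + f b := map_add f a b
      _ = ι ((hf a).choose) + ι ((hf b).choose) := by
            rw [(hf a).choose_spec, (hf b).choose_spec]
      _ = ι ((hf a).choose + (hf b).choose) := (map_add ι _ _).symm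
  map_smul' c a := by
    apply hι
    calc ι ((hf (c • a)).choose) = f (c • a) := (hf (c • a)).choose_spec
      _ = c • f a := map_smul f c a
      _ = c • ι ((hf a).choose) := by rw [(hf a).choose_spec]
      _ = ι ((RingHom.id R) c • (hf a).choose) := by rw [map_smul]; rfl

lemma liftInj_spec (ι : Y →ₗ[R] E) (hι : Function.Injective ι)
    (f : M →ₗ[R] E) (hf : ∀ x, f x ∈ Set.range ι) (x : M) :
    ι (liftInj ι hι f hf x) = f x := (hf x).choose_spec

/-- From a section of the projection of a short exact sequence, get a retraction of
the injection. -/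
lemma retraction_of_section (ι : Y →ₗ[R] E) (ε : E →ₗ[R] X)
    (hι : Function.Injective ι) (hex : Function.Exact ι ε)
    (s : X →ₗ[R] E) (hs : ∀ x, ε (s x) = x) :
    ∃ r : E →ₗ[R] Y, ∀ y, r (ι y) = y := by
  have hmem : ∀ e : E, ((LinearMap.id : E →ₗ[R] E) - s.comp ε) e ∈ Set.range ι := by
    intro e
    refine (hex _).mp ?_
    simp [hs]
  refine ⟨liftInj ι hι ((LinearMap.id : E →ₗ[R] E) - s.comp ε) hmem, fun y => ?_⟩
  apply hι
  rw [liftInj_spec]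
  have h0 : ε (ι y) = 0 := (hex _).mpr ⟨y, rfl⟩
  simp [h0]

end Helpers

/-- `CoSplit R Y X`: every short exact sequence `0 → Y → E → X → 0` splits;
equivalently `Ext¹(X, Y) = 0`. -/
def CoSplit (R : Type u) [Ring R] (Y X : Type u) [AddCommGroup Y] [AddCommGroup X]
    [Module R Y] [Module R X] : Prop :=
  ∀ (E : Type u) [AddCommGroup E] [Module R E],
    ∀ (ι : Y →ₗ[R] E) (ε : E →ₗ[R] X), Function.Injective ι → Function.Surjective ε →
      Function.Exact ι ε → ∃ s : X →ₗ[R] E, ∀ x, ε (s x) = x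

section CoSplit
variable {Y X X' A C : Type u} [AddCommGroup Y] [AddCommGroup X] [AddCommGroup X']
  [AddCommGroup A] [AddCommGroup C]
  [Module R Y] [Module R X] [Module R X'] [Module R A] [Module R C]

lemma CoSplit.of_equiv (h : CoSplit R Y X) (e : X ≃ₗ[R] X') : CoSplit R Y X' := by
  intro E _ _ ι ε hι hε hex
  obtain ⟨s, hs⟩ := h E ι ((e.symm : X' →ₗ[R] X).comp ε) hι (e.symm.surjective.comp hε)
    (by intro x; rw [← hex x]; simp)
  exact ⟨s.comp (e.symm : X' →ₗ[R] X), fun x => by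
    have := hs (e.symm x)
    apply e.symm.injective
    simpa using this⟩

variable {B : Type u} [AddCommGroup B] [Module R B]

/-- `CoSplit` (in the second variable) is closed under extensions. -/
lemma CoSplit.extension (i : A →ₗ[R] X) (p : X →ₗ[R] C)
    (hi : Function.Injective i) (hp : Function.Surjective p) (hex : Function.Exact i p)
    (hA : CoSplit R Y A) (hC : CoSplit R Y C) : CoSplit R Y X := by
  intro E _ _ ι ε hι hε hexE
  classical
  -- the preimage of `A` in `E`
  set EA : Submodule R E := Submodule.comap ε (LinearMap.range i) with hEA
  have hι0 : ∀ y, ε (ι y) = 0 := fun y => (hexE _).mpr ⟨y, rfl⟩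
  have hιmem : ∀ y, ι y ∈ EA := fun y => by
    simp only [hEA, Submodule.mem_comap, hι0]; exact Submodule.zero_mem _
  set ι' : Y →ₗ[R] EA := ι.codRestrict EA hιmem with hι'
  have hι'inj : Function.Injective ι' := fun a b hab => hι (congrArg Subtype.val hab)
  set φ : EA →ₗ[R] A := liftInj i hi (ε.comp EA.subtype) (fun x => x.2) with hφdef
  have hφ : ∀ x : EA, i (φ x) = ε x.1 := fun x => liftInj_spec i hi _ _ x
  have hφsurj : Function.Surjective φ := by
    intro a
    obtain ⟨e, he⟩ := hε (i a)
    refine ⟨⟨e, by simp [hEA, Submodule.mem_comap, he]⟩, hi ?_⟩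
    rw [hφ]; exact he
  have hexφ : Function.Exact ι' φ := by
    intro x
    constructor
    · intro hx
      have : ε x.1 = 0 := by rw [← hφ x, hx, map_zero]
      obtain ⟨y, hy⟩ := (hexE _).mp this
      exact ⟨y, Subtype.ext hy⟩
    · rintro ⟨y, rfl⟩
      apply hi
      rw [hφ, map_zero]
      exact hι0 y
  obtain ⟨sA, hsA⟩ := hA EA ι' φ hι'inj hφsurj hexφ
  -- quotient out the section
  set S : Submodule R E := LinearMap.range (EA.subtype ∘ₗ sA) with hS
  set π : E →ₗ[R] (E ⧸ S) := S.mkQ with hπ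
  have hπsurj : Function.Surjective π := Submodule.mkQ_surjective S
  have hπS : ∀ a : A, π ((sA a).1) = 0 := fun a => (Submodule.Quotient.mk_eq_zero S).mpr ⟨a, rfl⟩
  set ιb : Y →ₗ[R] (E ⧸ S) := π ∘ₗ ι with hιb
  have hιbinj : Function.Injective ιb := by
    intro y₁ y₂ h12
    have : π (ι (y₁ - y₂)) = 0 := by
      simp only [map_sub]
      rw [sub_eq_zero]; exact h12
    have hmem : ι (y₁ - y₂) ∈ S := (Submodule.Quotient.mk_eq_zero S).mp this
    obtain ⟨a, ha⟩ := hmem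
    have ha' : (sA a).1 = ι (y₁ - y₂) := ha
    have : i a = 0 := by
      have := hφ (sA a)
      rw [hsA a, ha'] at this
      rw [this, hι0]
    have ha0 : a = 0 := hi (by rw [this, map_zero])
    have : ι (y₁ - y₂) = 0 := by rw [← ha', ha0, map_zero, Submodule.coe_zero]
    have := hι (by rw [this, map_zero] : ι (y₁ - y₂) = ι 0)
    rwa [sub_eq_zero] at this
  have hker : S ≤ LinearMap.ker (p ∘ₗ ε) := by
    rintro s ⟨a, rfl⟩
    simp only [LinearMap.mem_ker, LinearMap.comp_apply, Submodule.coe_subtype]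
    rw [← hφ (sA a), hsA a]
    exact (hex _).mpr ⟨a, rfl⟩
  set εb : (E ⧸ S) →ₗ[R] C := S.liftQ (p ∘ₗ ε) hker with hεb
  have hεbπ : ∀ e, εb (π e) = p (ε e) := fun e => rfl
  have hεbsurj : Function.Surjective εb := by
    intro c
    obtain ⟨x, hx⟩ := hp c
    obtain ⟨e, he⟩ := hε x
    exact ⟨π e, by rw [hεbπ, he, hx]⟩
  have hexb : Function.Exact ιb εb := by
    intro z
    obtain ⟨e, rfl⟩ := hπsurj z
    constructor
    · intro hz
      rw [hεbπ] at hz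
      obtain ⟨a, ha⟩ := (hex _).mp hz
      have hmem : e ∈ EA := by simp [hEA, Submodule.mem_comap, ← ha]
      set xe : EA := ⟨e, hmem⟩ with hxe
      have hz2 : φ (xe - sA (φ xe)) = 0 := by
        rw [map_sub, hsA, sub_self]
      obtain ⟨y0, hy0⟩ := (hexφ _).mp hz2
      refine ⟨y0, ?_⟩
      have hy0' : ι y0 = e - (sA (φ xe)).1 := by
        have := congrArg Subtype.val hy0
        exact this
      show π (ι y0) = π e
      rw [hy0', map_sub, hπS, sub_zero]
    · rintro ⟨y, hy⟩
      rw [← hy]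
      show εb (π (ι y)) = 0
      rw [hεbπ (ι y), hι0, map_zero]
  obtain ⟨sC, hsC⟩ := hC (E ⧸ S) ιb εb hιbinj hεbsurj hexb
  obtain ⟨ρb, hρb⟩ := retraction_of_section ιb εb hιbinj hexb sC hsC
  set ρ : E →ₗ[R] Y := ρb ∘ₗ π with hρ
  have hρι : ∀ y, ρ (ι y) = y := fun y => hρb y
  set t : E →ₗ[R] E := LinearMap.id - ι ∘ₗ ρ with ht
  have htker : ∀ e, ε e = 0 → t e = 0 := by
    intro e he
    obtain ⟨y, rfl⟩ := (hexE _).mp he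
    simp [ht, hρι]
  refine ⟨liftSurj ε hε t htker, ?_⟩
  intro x
  obtain ⟨e, rfl⟩ := hε x
  rw [liftSurj_apply]
  simp [ht, hι0]

/-- Homomorphisms to `Y` extend along monomorphisms whose cokernel `C`
satisfies `CoSplit R Y C`. -/
lemma extend_hom (i : A →ₗ[R] B) (p : B →ₗ[R] C)
    (hi : Function.Injective i) (hp : Function.Surjective p) (hex : Function.Exact i p)
    (hC : CoSplit R Y C) (φ : A →ₗ[R] Y) : ∃ ψ : B →ₗ[R] Y, ∀ a, ψ (i a) = φ a := by
  classical
  set N : Submodule R (Y × B) := LinearMap.range (φ.prod (-i)) with hN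
  set mk : (Y × B) →ₗ[R] ((Y × B) ⧸ N) := N.mkQ with hmk
  have hNmem : ∀ a : A, (φ a, -(i a)) ∈ N := fun a => ⟨a, rfl⟩
  set ι : Y →ₗ[R] ((Y × B) ⧸ N) := mk ∘ₗ LinearMap.inl R Y B with hι
  have hιinj : Function.Injective ι := by
    intro y₁ y₂ h12
    have h0 : mk ((y₁ - y₂, 0) : Y × B) = 0 := by
      have : ((y₁ - y₂, 0) : Y × B) = (y₁, (0:B)) - (y₂, 0) := by simp [Prod.ext_iff]
      rw [this, map_sub, sub_eq_zero]; exact h12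
    obtain ⟨a, ha⟩ := (Submodule.Quotient.mk_eq_zero N).mp h0
    have ha1 : φ a = y₁ - y₂ := congrArg Prod.fst ha
    have ha2 : -(i a) = 0 := congrArg Prod.snd ha
    have hia : i a = 0 := by rw [← neg_neg (i a), ha2, neg_zero]
    have ha0 : a = 0 := by apply hi; rw [hia, map_zero]
    rw [ha0, map_zero] at ha1
    exact (sub_eq_zero.mp ha1.symm)
  have hkerN : N ≤ LinearMap.ker (p ∘ₗ LinearMap.snd R Y B) := by
    rintro x ⟨a, rfl⟩
    simp only [LinearMap.mem_ker, LinearMap.comp_apply, LinearMap.snd_apply,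
      LinearMap.prod_apply, Pi.prod, Function.prod, LinearMap.neg_apply, map_neg, neg_eq_zero]
    exact (hex _).mpr ⟨a, rfl⟩
  set ε : ((Y × B) ⧸ N) →ₗ[R] C := N.liftQ (p ∘ₗ LinearMap.snd R Y B) hkerN with hε
  have hεmk : ∀ x : Y × B, ε (mk x) = p x.2 := fun x => rfl
  have hεsurj : Function.Surjective ε := by
    intro c
    obtain ⟨b, hb⟩ := hp c
    exact ⟨mk (0, b), by rw [hεmk, hb]⟩
  have hexε : Function.Exact ι ε := by
    intro z
    obtain ⟨x, rfl⟩ := Submodule.mkQ_surjective N z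
    constructor
    · intro hz
      rw [hεmk] at hz
      obtain ⟨a, ha⟩ := (hex _).mp hz
      refine ⟨x.1 + φ a, ?_⟩
      show mk (x.1 + φ a, 0) = mk x
      rw [← sub_eq_zero, ← map_sub]
      show Submodule.Quotient.mk _ = 0
      rw [Submodule.Quotient.mk_eq_zero]
      exact ⟨a, by simp [Prod.ext_iff, ← ha]⟩
    · rintro ⟨y, hy⟩
      rw [← hy]
      show ε (mk (y, 0)) = 0
      rw [hεmk, map_zero]
  obtain ⟨s, hs⟩ := hC _ ι ε hιinj hεsurj hexε
  obtain ⟨r, hr⟩ := retraction_of_section ι ε hιinj hexε s hs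
  refine ⟨r ∘ₗ mk ∘ₗ LinearMap.inr R Y B, fun a => ?_⟩
  have key : mk (0, i a) = mk (φ a, 0) := by
    rw [← sub_eq_zero, ← map_sub]
    show Submodule.Quotient.mk _ = 0
    rw [Submodule.Quotient.mk_eq_zero]
    exact ⟨-a, by simp [Prod.ext_iff]⟩
  show r (mk (0, i a)) = φ a
  rw [key]
  exact hr (φ a)

end CoSplit

end GpdAux

namespace GpdAux
open Function LinearMap

variable {R : Type u} [Ring R] {𝒳 : ModuleCat.{u} R → Prop}

/-- Kernels in a complete resolution satisfy `CoSplit Y ·` for `Y ∈ 𝒳`: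
`Ext¹` of a Gorenstein projective against objects of `𝒳` vanishes. -/
lemma cosplit_ker (C : XCompleteResolution R 𝒳) (Y : ModuleCat.{u} R) (hY : 𝒳 Y) (k : ℤ) :
    CoSplit R Y ↥(LinearMap.ker (C.d k)) := by
  obtain ⟨m, rfl⟩ : ∃ m : ℤ, k = m + 1 + 1 + 1 := ⟨k - 3, by ring⟩
  intro E _ _ ι ε hι hε hexE
  classical
  haveI := C.projective (m + 1 + 1)
  set π : C.P (m + 1 + 1) →ₗ[R] ↥(LinearMap.ker (C.d (m + 1 + 1 + 1))) :=
    (C.d (m + 1 + 1)).codRestrict _ (fun x => (C.exact (m + 1 + 1) _).mpr ⟨x, rfl⟩) with hπdef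
  have hπval : ∀ x, (π x).1 = C.d (m + 1 + 1) x := fun x => rfl
  have hπ : Function.Surjective π := by
    intro z
    obtain ⟨x, hx⟩ := (C.exact (m + 1 + 1) z.1).mp z.2
    exact ⟨x, Subtype.ext (by rw [hπval, hx])⟩
  obtain ⟨lam, hlam⟩ := Module.projective_lifting_property ε π hε
  have hlam' : ∀ x, ε (lam x) = π x := fun x => LinearMap.congr_fun hlam x
  have hmem : ∀ x : C.P (m + 1), lam (C.d (m + 1) x) ∈ Set.range ι := by
    intro x
    refine (hexE _).mp ?_
    rw [hlam']
    exact Subtype.ext ((C.exact (m + 1) _).mpr ⟨x, rfl⟩)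
  set f : C.P (m + 1) →ₗ[R] Y := liftInj ι hι (lam ∘ₗ C.d (m + 1)) hmem with hfdef
  have hf : ∀ x, ι (f x) = lam (C.d (m + 1) x) := fun x => liftInj_spec ι hι _ _ x
  have hf0 : f ∘ₗ C.d m = 0 := by
    ext x
    apply hι
    rw [LinearMap.comp_apply, hf, LinearMap.zero_apply, map_zero]
    have : C.d (m + 1) (C.d m x) = 0 := (C.exact m _).mpr ⟨x, rfl⟩
    rw [this, map_zero]
  obtain ⟨g, hg⟩ := (C.homExact Y hY m f).mp hf0
  have hg' : ∀ x, g (C.d (m + 1) x) = f x := fun x => LinearMap.congr_fun hg x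
  set lam' : C.P (m + 1 + 1) →ₗ[R] E := lam - ι ∘ₗ g with hlam'def
  have hkill : ∀ x, π x = 0 → lam' x = 0 := by
    intro x hx
    have hx0 : C.d (m + 1 + 1) x = 0 := by rw [← hπval x, hx]; rfl
    obtain ⟨w, hw⟩ := (C.exact (m + 1) x).mp hx0
    simp only [hlam'def, LinearMap.sub_apply, LinearMap.comp_apply]
    rw [← hw, hg', hf, sub_self]
  refine ⟨liftSurj π hπ lam' hkill, fun z => ?_⟩
  obtain ⟨x, rfl⟩ := hπ z
  rw [liftSurj_apply]
  simp only [hlam'def, LinearMap.sub_apply, LinearMap.comp_apply, map_sub]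
  rw [hlam']
  have : ε (ι (g x)) = 0 := (hexE _).mpr ⟨g x, rfl⟩
  rw [this, sub_zero]

lemma cosplit_of_xgp {G : ModuleCat.{u} R} (hG : XGorensteinProjective R 𝒳 G)
    (Y : ModuleCat.{u} R) (hY : 𝒳 Y) : CoSplit R Y G := by
  obtain ⟨C, ⟨e⟩⟩ := hG
  exact (cosplit_ker C Y hY 0).of_equiv e.symm

lemma xgp_of_equiv {G G' : ModuleCat.{u} R} (e : G ≃ₗ[R] G')
    (hG : XGorensteinProjective R 𝒳 G) : XGorensteinProjective R 𝒳 G' := by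
  obtain ⟨C, ⟨eG⟩⟩ := hG
  exact ⟨C, ⟨e.symm.trans eG⟩⟩

/-- Projective modules are `𝒳`-Gorenstein projective. -/
lemma xgp_of_projective (P : ModuleCat.{u} R) (hP : Module.Projective R P) :
    XGorensteinProjective R 𝒳 P := by
  haveI := hP
  set d : (P × P : Type u) →ₗ[R] (P × P : Type u) :=
    (LinearMap.snd R P P).prod 0 with hd
  have hdapp : ∀ x : (P × P : Type u), d x = (x.2, 0) := fun x => rfl
  haveI hprod : Module.Projective R ((P × P : Type u)) := inferInstance
  refine ⟨⟨fun _ => ModuleCat.of R (P × P : Type u), fun _ => d, fun _ => hprod,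
    ?_, ?_⟩, ⟨?_⟩⟩
  · intro n y
    constructor
    · intro hy
      have : y.2 = 0 := congrArg Prod.fst hy
      exact ⟨(0, y.1), by show d (0, y.1) = y; rw [hdapp]; exact Prod.ext rfl this.symm⟩
    · rintro ⟨x, rfl⟩
      show d (d x) = 0
      rw [hdapp, hdapp]
      rfl
  · intro Y hY n
    intro f
    constructor
    · intro hf
      have hf0 : ∀ x : (P × P : Type u), f (x.2, 0) = 0 := by
        intro x
        have := LinearMap.congr_fun hf x
        simpa [hdapp] using this
      refine ⟨f ∘ₗ ((0 : (P × P : Type u) →ₗ[R] ↥P).prod (LinearMap.fst R P P)), ?_⟩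
      refine LinearMap.ext fun x => ?_
      show f (0, (d x).1) = f x
      rw [hdapp]
      have : (x : (P × P : Type u)) = (x.1, 0) + (0, x.2) := by
        apply Prod.ext
        · show x.1 = x.1 + 0; rw [add_zero]
        · show x.2 = 0 + x.2; rw [zero_add]
      conv_rhs => rw [this]
      rw [map_add, hf0 (0, x.1), zero_add]
    · rintro ⟨g, rfl⟩
      refine LinearMap.ext fun x => ?_
      show g (d (d x)) = 0
      rw [hdapp, hdapp]
      exact map_zero g
  · -- P ≃ ker d
    refine LinearEquiv.ofBijective
      ((LinearMap.inl R P P).codRestrict _ (fun a => by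
        show d (a, 0) = 0; rw [hdapp]; rfl)) ⟨?_, ?_⟩
    · intro a b hab
      exact congrArg (Prod.fst ∘ Subtype.val) hab
    · intro z
      have hz : (z.1).2 = 0 := congrArg Prod.fst z.2
      exact ⟨z.1.1, Subtype.ext (Prod.ext rfl hz.symm)⟩


lemma inj_of_zero {M N : Type u} [AddCommGroup M] [AddCommGroup N] [Module R M] [Module R N]
    (f : M →ₗ[R] N) (h : ∀ x, f x = 0 → x = 0) : Function.Injective f := by
  intro a b hab
  have := h (a - b) (by rw [map_sub, hab, sub_self])
  rwa [sub_eq_zero] at this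

section Horseshoe
variable (CA CC : XCompleteResolution R 𝒳)

/-- The `n`-th cycle module of a complete resolution. -/
abbrev Zc (C : XCompleteResolution R 𝒳) (n : ℤ) : Type u := ↥(LinearMap.ker (C.d n))

/-- The canonical surjection `P n → Z (n+1)`. -/
noncomputable def sg (C : XCompleteResolution R 𝒳) (n : ℤ) : C.P n →ₗ[R] Zc C (n + 1) :=
  (C.d n).codRestrict _ (fun x => (C.exact n _).mpr ⟨x, rfl⟩)

lemma sg_val (C : XCompleteResolution R 𝒳) (n : ℤ) (x : C.P n) :
    ((sg C n) x).1 = C.d n x := rfl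

lemma sg_surj (C : XCompleteResolution R 𝒳) (n : ℤ) : Function.Surjective (sg C n) := by
  intro z
  obtain ⟨x, hx⟩ := (C.exact n z.1).mp z.2
  exact ⟨x, Subtype.ext hx⟩

lemma sg_zero_iff (C : XCompleteResolution R 𝒳) (n : ℤ) (x : C.P n) :
    sg C n x = 0 ↔ C.d n x = 0 := by
  constructor
  · intro h; rw [← sg_val, h]; rfl
  · intro h; exact Subtype.ext h

/-- A layer of the horseshoe: an extension of the `n`-th cycles. -/
structure Lvl (n : ℤ) where
  B : ModuleCat.{u} R
  i : Zc CA n →ₗ[R] B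
  p : B →ₗ[R] Zc CC n
  inj : Function.Injective i
  surj : Function.Surjective p
  exact : Function.Exact i p

/-- Total module of the two resolutions in degree `n`. -/
abbrev QM (n : ℤ) : Type u := ((CA.P n × CC.P n : Type u))

/-- A link between two consecutive layers. -/
structure Lnk (n : ℤ) where
  L0 : Lvl CA CC n
  L1 : Lvl CA CC (n + 1)
  u : L0.B →ₗ[R] QM CA CC n
  q : QM CA CC n →ₗ[R] L1.B
  uinj : Function.Injective u
  qsurj : Function.Surjective q
  uq : Function.Exact u q

variable {CA CC}

lemma cosplit_lvl {n : ℤ} (L : Lvl CA CC n) (Y : ModuleCat.{u} R) (hY : 𝒳 Y) :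
    CoSplit R Y L.B :=
  CoSplit.extension L.i L.p L.inj L.surj L.exact
    (cosplit_ker CA Y hY n) (cosplit_ker CC Y hY n)

variable (h𝒳 : ∀ P : ModuleCat.{u} R, Module.Projective R P → 𝒳 P)

/-- The rightward step of the horseshoe construction. -/
noncomputable def rightLink (n : ℤ) (L : Lvl CA CC n) : Lnk CA CC n := by
  classical
  have hψ := extend_hom L.i L.p L.inj L.surj L.exact
    (cosplit_ker CC (CA.P n) (h𝒳 _ (CA.projective n)) n) ((LinearMap.ker (CA.d n)).subtype)
  set ψ : L.B →ₗ[R] CA.P n := hψ.choose with hψdef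
  have hψs : ∀ a, ψ (L.i a) = a.1 := hψ.choose_spec
  set u : L.B →ₗ[R] QM CA CC n := ψ.prod ((LinearMap.ker (CC.d n)).subtype ∘ₗ L.p) with hu
  have huval : ∀ b, u b = (ψ b, (L.p b).1) := fun b => rfl
  have huinj : Function.Injective u := by
    apply inj_of_zero
    intro x hx
    have h2 : (L.p x).1 = 0 := congrArg Prod.snd hx
    obtain ⟨a, rfl⟩ := (L.exact x).mp (Subtype.ext h2)
    have h1 : ψ (L.i a) = 0 := congrArg Prod.fst hx
    rw [hψs] at h1
    have ha0 : a = 0 := Subtype.ext h1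
    rw [ha0, map_zero]
  set q : QM CA CC n →ₗ[R] ((QM CA CC n) ⧸ LinearMap.range u) := (LinearMap.range u).mkQ with hq
  have hqsurj : Function.Surjective q := Submodule.mkQ_surjective _
  have huq : Function.Exact u q := by
    intro y
    rw [hq]
    exact (Submodule.Quotient.mk_eq_zero _)
  have hq0 : ∀ b, q (u b) = 0 := fun b => (huq _).mpr ⟨b, rfl⟩
  have hkill : ∀ x, sg CA n x = 0 → (q ∘ₗ LinearMap.inl R (CA.P n) (CC.P n)) x = 0 := by
    intro x hx
    have hxk : x ∈ LinearMap.ker (CA.d n) := (sg_zero_iff CA n x).mp hx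
    have hLp : L.p (L.i ⟨x, hxk⟩) = 0 := (L.exact _).mpr ⟨⟨x, hxk⟩, rfl⟩
    have : u (L.i ⟨x, hxk⟩) = ((x, 0) : QM CA CC n) := by
      rw [huval, hψs, hLp]; rfl
    show q ((x, 0) : QM CA CC n) = 0
    rw [← this, hq0]
  set i1 : Zc CA (n + 1) →ₗ[R] ((QM CA CC n) ⧸ LinearMap.range u) :=
    liftSurj (sg CA n) (sg_surj CA n) (q ∘ₗ LinearMap.inl R (CA.P n) (CC.P n)) hkill with hi1
  have hi1s : ∀ x, i1 (sg CA n x) = q ((x, 0) : QM CA CC n) :=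
    fun x => liftSurj_apply (sg CA n) (sg_surj CA n) _ hkill x
  have hkill2 : ∀ y : QM CA CC n, q y = 0 → (sg CC n ∘ₗ LinearMap.snd R (CA.P n) (CC.P n)) y = 0 := by
    intro y hy
    obtain ⟨b, rfl⟩ := (huq y).mp hy
    show sg CC n (u b).2 = 0
    rw [huval]
    exact (sg_zero_iff CC n _).mpr (L.p b).2
  set p1 : ((QM CA CC n) ⧸ LinearMap.range u) →ₗ[R] Zc CC (n + 1) :=
    liftSurj q hqsurj (sg CC n ∘ₗ LinearMap.snd R (CA.P n) (CC.P n)) hkill2 with hp1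
  have hp1s : ∀ y : QM CA CC n, p1 (q y) = sg CC n y.2 :=
    fun y => liftSurj_apply q hqsurj _ hkill2 y
  refine ⟨L, ⟨ModuleCat.of R ((QM CA CC n) ⧸ LinearMap.range u), i1, p1, ?_, ?_, ?_⟩,
    u, q, huinj, hqsurj, huq⟩
  · -- inj i1
    apply inj_of_zero
    intro z hz
    obtain ⟨x, rfl⟩ := sg_surj CA n z
    have hz2 : q ((x, 0) : QM CA CC n) = 0 := (hi1s x).symm.trans hz
    obtain ⟨b, hb⟩ := (huq _).mp hz2
    have hb1 : ψ b = x := congrArg Prod.fst hb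
    have hb2 : (L.p b).1 = 0 := congrArg Prod.snd hb
    obtain ⟨a, rfl⟩ := (L.exact b).mp (Subtype.ext hb2)
    rw [hψs] at hb1
    apply Subtype.ext
    rw [sg_val, ← hb1]
    exact a.2
  · -- surj p1
    intro z
    obtain ⟨y, hy⟩ := sg_surj CC n z
    exact ⟨q ((0, y) : QM CA CC n), (hp1s ((0, y) : QM CA CC n)).trans hy⟩
  · -- exact (i1, p1)
    intro w
    obtain ⟨⟨x, y⟩, rfl⟩ := hqsurj w
    constructor
    · intro hw
      have hw2 : sg CC n y = 0 := (hp1s ((x, y) : QM CA CC n)).symm.trans hw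
      have hyk : y ∈ LinearMap.ker (CC.d n) := (sg_zero_iff CC n y).mp hw2
      obtain ⟨b, hb⟩ := L.surj ⟨y, hyk⟩
      refine ⟨sg CA n (x - ψ b), ?_⟩
      refine (hi1s (x - ψ b)).trans ?_
      rw [← sub_eq_zero, ← map_sub]
      have hdiff : ((x - ψ b, 0) : QM CA CC n) - ((x, y) : QM CA CC n) = -(u b) := by
        rw [huval, hb]
        apply Prod.ext
        · show x - ψ b - x = -(ψ b); abel
        · show (0 : (CC.P n : Type u)) - y = -y; abel
      rw [hdiff, map_neg, hq0, neg_zero]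
    · rintro ⟨z, hz⟩
      obtain ⟨x', rfl⟩ := sg_surj CA n z
      calc p1 (q ((x, y) : QM CA CC n))
          = p1 (i1 (sg CA n x')) := (congrArg p1 hz).symm
        _ = p1 (q ((x', 0) : QM CA CC n)) := congrArg p1 (hi1s x')
        _ = sg CC n (((x', 0) : QM CA CC n)).2 := hp1s _
        _ = 0 := map_zero _

/-- The leftward step of the horseshoe construction. -/
noncomputable def leftLink (n : ℤ) (L : Lvl CA CC (n + 1)) : Lnk CA CC n := by
  classical
  haveI := CC.projective n
  obtain hτ := Module.projective_lifting_property L.p (sg CC n) L.surj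
  set τ : CC.P n →ₗ[R] L.B := hτ.choose with hτdef
  have hτs : ∀ y, L.p (τ y) = sg CC n y := fun y => LinearMap.congr_fun hτ.choose_spec y
  set v : QM CA CC n →ₗ[R] L.B := (L.i ∘ₗ sg CA n).coprod τ with hv
  have hvval : ∀ x : QM CA CC n, v x = L.i (sg CA n x.1) + τ x.2 := fun x => rfl
  have hvsurj : Function.Surjective v := by
    intro b
    obtain ⟨y, hy⟩ := sg_surj CC n (L.p b)
    have : L.p (b - τ y) = 0 := by rw [map_sub, hτs, hy, sub_self]
    obtain ⟨a, ha⟩ := (L.exact _).mp this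
    obtain ⟨x, hx⟩ := sg_surj CA n a
    refine ⟨(x, y), ?_⟩
    rw [hvval]
    show L.i (sg CA n x) + τ y = b
    rw [hx, ha]
    abel
  have hvker : Function.Exact (LinearMap.ker v).subtype v := by
    intro y
    constructor
    · intro hy; exact ⟨⟨y, hy⟩, rfl⟩
    · rintro ⟨z, rfl⟩; exact z.2
  refine ⟨⟨ModuleCat.of R ↥(LinearMap.ker v),
      ?_, ?_, ?_, ?_, ?_⟩, L,
    (LinearMap.ker v).subtype, v, Submodule.injective_subtype _, hvsurj, hvker⟩
  · -- i0
    refine (LinearMap.inl R (CA.P n) (CC.P n) ∘ₗ (LinearMap.ker (CA.d n)).subtype).codRestrict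
      (LinearMap.ker v) (fun a => ?_)
    show v ((a.1, 0) : QM CA CC n) = 0
    rw [hvval]
    show L.i (sg CA n a.1) + τ 0 = 0
    rw [(sg_zero_iff CA n a.1).mpr a.2, map_zero, map_zero, add_zero]
  · -- p0
    refine (LinearMap.snd R (CA.P n) (CC.P n) ∘ₗ (LinearMap.ker v).subtype).codRestrict
      (LinearMap.ker (CC.d n)) (fun x => ?_)
    have hx : v x.1 = 0 := x.2
    have : L.p (v x.1) = 0 := by rw [hx, map_zero]
    rw [hvval, map_add, hτs] at this
    have h1 : L.p (L.i (sg CA n x.1.1)) = 0 := (L.exact _).mpr ⟨_, rfl⟩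
    rw [h1, zero_add] at this
    exact (sg_zero_iff CC n x.1.2).mp this
  · -- inj
    apply inj_of_zero
    intro a ha
    have : ((a.1 : CA.P n), (0 : CC.P n)).1 = 0 := congrArg (Prod.fst ∘ Subtype.val) ha
    exact Subtype.ext this
  · -- surj
    intro c
    have hc : L.p (τ c.1) = 0 := by
      rw [hτs]; exact (sg_zero_iff CC n c.1).mpr c.2
    obtain ⟨a, ha⟩ := (L.exact _).mp hc
    obtain ⟨x, hx⟩ := sg_surj CA n a
    have hker : ((-x, c.1) : QM CA CC n) ∈ LinearMap.ker v := by
      show v ((-x, c.1) : QM CA CC n) = 0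
      rw [hvval]
      show L.i (sg CA n (-x)) + τ c.1 = 0
      rw [map_neg, map_neg, hx, ha]
      abel
    exact ⟨⟨_, hker⟩, Subtype.ext rfl⟩
  · -- exact
    intro x
    constructor
    · intro hx
      have hx2 : x.1.2 = 0 := congrArg Subtype.val hx
      have hvx : v x.1 = 0 := x.2
      rw [hvval, hx2, map_zero, add_zero] at hvx
      have : sg CA n x.1.1 = 0 := by
        apply L.inj; rw [hvx, map_zero]
      have hmem : x.1.1 ∈ LinearMap.ker (CA.d n) := (sg_zero_iff CA n x.1.1).mp this
      refine ⟨⟨x.1.1, hmem⟩, ?_⟩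
      apply Subtype.ext
      show ((x.1.1 : CA.P n), (0 : CC.P n)) = x.1
      exact Prod.ext rfl hx2.symm
    · rintro ⟨a, rfl⟩
      apply Subtype.ext
      show ((a.1, (0 : CC.P n)) : QM CA CC n).2 = 0
      rfl

end Horseshoe

section Glue
variable {CA CC : XCompleteResolution R 𝒳}
variable (h𝒳 : ∀ P : ModuleCat.{u} R, Module.Projective R P → 𝒳 P)

/-- Cast between the underlying modules of equal layers. -/
noncomputable def lcast {m : ℤ} {X Y : Lvl CA CC m} (h : X = Y) :
    (X.B : Type u) ≃ₗ[R] Y.B := by subst h; exact LinearEquiv.refl R _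

variable (L0 : Lvl CA CC 0)

/-- The nonnegative layers. -/
noncomputable def levF : ∀ k : ℕ, Lvl CA CC (Int.ofNat k)
  | 0 => L0
  | (k+1) => (rightLink h𝒳 (Int.ofNat k) (levF k)).L1

/-- The data `(lvl (-k-1+1))` for negative layers. -/
noncomputable def levG : ∀ k : ℕ, Lvl CA CC (Int.negSucc k + 1)
  | 0 => L0
  | (k+1) => (leftLink (Int.negSucc k) (levG k)).L0

/-- All links. -/
noncomputable def link : ∀ n : ℤ, Lnk CA CC n
  | .ofNat k => rightLink h𝒳 (Int.ofNat k) (levF h𝒳 L0 k)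
  | .negSucc k => leftLink (Int.negSucc k) (levG L0 k)

lemma hlink : ∀ n : ℤ, (link h𝒳 L0 n).L1 = (link h𝒳 L0 (n + 1)).L0
  | .ofNat k => rfl
  | .negSucc 0 => rfl
  | .negSucc (k+1) => rfl

set_option maxHeartbeats 1600000 in
/-- `𝒳`-Gorenstein projectives are closed under extensions. -/
lemma xgp_extension (h𝒳' : ∀ P : ModuleCat.{u} R, Module.Projective R P → 𝒳 P)
    {A B C : ModuleCat.{u} R} (i : A →ₗ[R] B) (p : B →ₗ[R] C)
    (hi : Function.Injective i) (hp : Function.Surjective p) (hex : Function.Exact i p)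
    (hA : XGorensteinProjective R 𝒳 A) (hC : XGorensteinProjective R 𝒳 C) :
    XGorensteinProjective R 𝒳 B := by
  classical
  obtain ⟨CA, ⟨eA⟩⟩ := hA
  obtain ⟨CC, ⟨eC⟩⟩ := hC
  -- initial layer
  set L0 : Lvl CA CC 0 :=
    { B := B
      i := i ∘ₗ (eA.symm : Zc CA 0 →ₗ[R] A)
      p := (eC : C →ₗ[R] Zc CC 0) ∘ₗ p
      inj := hi.comp eA.symm.injective
      surj := eC.surjective.comp hp
      exact := by
        intro x
        constructor
        · intro hx
          have hx0 : p x = 0 := by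
            apply eC.injective
            rw [map_zero]; exact hx
          obtain ⟨a, ha⟩ := (hex x).mp hx0
          exact ⟨eA a, by show i (eA.symm (eA a)) = x; rw [eA.symm_apply_apply]; exact ha⟩
        · rintro ⟨a, rfl⟩
          show eC (p (i (eA.symm a))) = 0
          have : p (i (eA.symm a)) = 0 := (hex _).mpr ⟨_, rfl⟩
          rw [this, map_zero] } with hL0
  set lnk : ∀ n : ℤ, Lnk CA CC n := link h𝒳' L0 with hlnk
  have hl : ∀ n : ℤ, (lnk n).L1 = (lnk (n + 1)).L0 := hlink h𝒳' L0
  set qt : ∀ n : ℤ, (QM CA CC n →ₗ[R] ((lnk (n + 1)).L0.B : Type u)) :=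
    fun n => (lcast (hl n)).toLinearMap ∘ₗ (lnk n).q with hqt
  have hqtsurj : ∀ n, Function.Surjective (qt n) :=
    fun n => (lcast (hl n)).surjective.comp (lnk n).qsurj
  have hqtzero : ∀ n (y : QM CA CC n), qt n y = 0 ↔ (lnk n).q y = 0 := by
    intro n y
    constructor
    · intro h
      apply (lcast (hl n)).injective
      rw [map_zero]; exact h
    · intro h
      show (lcast (hl n)) ((lnk n).q y) = 0
      rw [h, map_zero]
  set D : ∀ n : ℤ, (QM CA CC n →ₗ[R] QM CA CC (n + 1)) :=
    fun n => (lnk (n + 1)).u ∘ₗ qt n with hD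
  have hDval : ∀ n (x : QM CA CC n), D n x = (lnk (n + 1)).u (qt n x) := fun n x => rfl
  have huzero : ∀ (m : ℤ) (b : ((lnk m).L0.B : Type u)), (lnk m).u b = 0 ↔ b = 0 := by
    intro m b
    constructor
    · intro h
      apply (lnk m).uinj
      rw [h, map_zero]
    · intro h; rw [h, map_zero]
  -- exactness
  have hexact : ∀ n : ℤ, Function.Exact (D n) (D (n + 1)) := by
    intro n y
    rw [hDval]
    constructor
    · intro hy
      have h1 : qt (n + 1) y = 0 := ((huzero _ _).mp hy)
      have h2 : (lnk (n + 1)).q y = 0 := (hqtzero _ _).mp h1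
      obtain ⟨b, hb⟩ := ((lnk (n + 1)).uq y).mp h2
      obtain ⟨w, hw⟩ := hqtsurj n b
      exact ⟨w, by rw [hDval, hw, hb]⟩
    · rintro ⟨w, rfl⟩
      rw [hDval]
      have h0 : (lnk (n + 1)).q ((lnk (n + 1)).u (qt n w)) = 0 :=
        ((lnk (n + 1)).uq _).mpr ⟨_, rfl⟩
      have h1 : qt (n + 1) ((lnk (n + 1)).u (qt n w)) = 0 := (hqtzero _ _).mpr h0
      rw [h1, map_zero]
  -- the complete resolution of B
  refine ⟨⟨fun n => ModuleCat.of R (QM CA CC n), D,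
    fun n => by
      haveI := CA.projective n; haveI := CC.projective n
      exact (inferInstance : Module.Projective R (QM CA CC n)),
    hexact, ?_⟩, ⟨?_⟩⟩
  · -- homExact
    intro Y hY n f
    constructor
    · intro hf
      have h1 : ∀ b, f ((lnk (n + 1)).u b) = 0 := by
        intro b
        obtain ⟨w, rfl⟩ := hqtsurj n b
        exact LinearMap.congr_fun hf w
      have h2 : ∀ y, (lnk (n + 1)).q y = 0 → f y = 0 := by
        intro y hy
        obtain ⟨b, rfl⟩ := ((lnk (n + 1)).uq y).mp hy
        exact h1 b
      set fbar := liftSurj ((lnk (n + 1)).q) (lnk (n + 1)).qsurj f h2 with hfbar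
      have hfbars : ∀ y, fbar ((lnk (n + 1)).q y) = f y :=
        fun y => liftSurj_apply _ _ _ _ y
      obtain ⟨g, hg⟩ := extend_hom ((lnk (n + 1 + 1)).u) ((lnk (n + 1 + 1)).q)
        (lnk (n + 1 + 1)).uinj (lnk (n + 1 + 1)).qsurj (lnk (n + 1 + 1)).uq
        (cosplit_lvl ((lnk (n + 1 + 1)).L1) Y hY)
        (fbar ∘ₗ (lcast (hl (n + 1))).symm.toLinearMap)
      refine ⟨g, ?_⟩
      refine LinearMap.ext fun x => ?_
      show g (D (n + 1) x) = f x
      rw [hDval, hg]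
      show fbar ((lcast (hl (n + 1))).symm ((lcast (hl (n + 1))) ((lnk (n + 1)).q x))) = f x
      rw [LinearEquiv.symm_apply_apply]
      exact hfbars x
    · rintro ⟨g, rfl⟩
      refine LinearMap.ext fun x => ?_
      show g (D (n + 1) (D n x)) = 0
      rw [hDval, hDval]
      have h0 : (lnk (n + 1)).q ((lnk (n + 1)).u (qt n x)) = 0 :=
        ((lnk (n + 1)).uq _).mpr ⟨_, rfl⟩
      have h1 : qt (n + 1) ((lnk (n + 1)).u (qt n x)) = 0 := (hqtzero _ _).mpr h0
      rw [h1, map_zero, map_zero]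
  · -- B ≃ ker (D 0)
    set j : ((lnk 0).L0.B : Type u) →ₗ[R] ↥(LinearMap.ker (D 0)) :=
      ((lnk 0).u).codRestrict (LinearMap.ker (D 0)) (fun b => by
        show D 0 ((lnk 0).u b) = 0
        rw [hDval]
        have h0 : (lnk 0).q ((lnk 0).u b) = 0 := ((lnk 0).uq _).mpr ⟨_, rfl⟩
        have h1 : qt 0 ((lnk 0).u b) = 0 := (hqtzero _ _).mpr h0
        rw [h1, map_zero]) with hj
    have hjbij : Function.Bijective j := by
      constructor
      · intro a b hab
        exact (lnk 0).uinj (congrArg Subtype.val hab)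
      · intro z
        have hz : D 0 z.1 = 0 := z.2
        rw [hDval] at hz
        have h1 : qt 0 z.1 = 0 := (huzero _ _).mp hz
        have h2 : (lnk 0).q z.1 = 0 := (hqtzero _ _).mp h1
        obtain ⟨b, hb⟩ := ((lnk 0).uq z.1).mp h2
        exact ⟨b, Subtype.ext hb⟩
    exact (show (B : Type u) ≃ₗ[R] ((lnk 0).L0.B : Type u) from LinearEquiv.refl R _).trans
      (LinearEquiv.ofBijective j hjbij)

end Glue

section Pushouts

/-- Pushout of a mono along an epi: from `0 → K' → G' → L → 0` and a mono
`j : G' ↪ P` with cokernel `H`, produce `D` with `0 → K' → P → D → 0` and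
`0 → L → D → H → 0`. -/
lemma pushout_mono_epi {K' G' L P H : ModuleCat.{u} R}
    (k : K' →ₗ[R] G') (π : G' →ₗ[R] L) (j : G' →ₗ[R] P) (r : P →ₗ[R] H)
    (hkinj : Function.Injective k) (hπsurj : Function.Surjective π)
    (hkπ : Function.Exact k π)
    (hjinj : Function.Injective j) (hrsurj : Function.Surjective r)
    (hjr : Function.Exact j r) :
    ∃ (D : ModuleCat.{u} R) (fD : P →ₗ[R] D) (μ : L →ₗ[R] D) (tD : D →ₗ[R] H),
      Function.Surjective fD ∧ Function.Exact (j ∘ₗ k) fD ∧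
      Function.Injective μ ∧ Function.Surjective tD ∧ Function.Exact μ tD := by
  classical
  set N : Submodule R ((P × L : Type u)) := LinearMap.range (j.prod (-π)) with hN
  set mk : ((P × L : Type u)) →ₗ[R] (((P × L : Type u)) ⧸ N) := N.mkQ with hmk
  have hNmem : ∀ g, ((j g, -(π g)) : (P × L : Type u)) ∈ N := fun g => ⟨g, rfl⟩
  have hmk0 : ∀ x : (P × L : Type u), mk x = 0 ↔ x ∈ N := fun x => Submodule.Quotient.mk_eq_zero N
  set fD : P →ₗ[R] (((P × L : Type u)) ⧸ N) := mk ∘ₗ LinearMap.inl R (P : Type u) (L : Type u) with hfD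
  set μ : L →ₗ[R] (((P × L : Type u)) ⧸ N) := mk ∘ₗ LinearMap.inr R (P : Type u) (L : Type u) with hμ
  have hkerN : N ≤ LinearMap.ker (r ∘ₗ LinearMap.fst R (P : Type u) (L : Type u)) := by
    rintro x ⟨g, rfl⟩
    show r (j g) = 0
    exact (hjr _).mpr ⟨g, rfl⟩
  set tD : (((P × L : Type u)) ⧸ N) →ₗ[R] H := N.liftQ _ hkerN with htD
  have htDmk : ∀ x : (P × L : Type u), tD (mk x) = r x.1 := fun x => rfl
  refine ⟨ModuleCat.of R (((P × L : Type u)) ⧸ N), fD, μ, tD, ?_, ?_, ?_, ?_, ?_⟩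
  · -- fD surjective
    intro w
    obtain ⟨⟨p, l⟩, rfl⟩ := Submodule.mkQ_surjective N w
    obtain ⟨g, rfl⟩ := hπsurj l
    refine ⟨p + j g, ?_⟩
    show mk ((p + j g, 0) : (P × L : Type u)) = mk ((p, π g) : (P × L : Type u))
    rw [← sub_eq_zero, ← map_sub, hmk0]
    refine ⟨g, ?_⟩
    apply Prod.ext
    · show j g = p + j g - p; abel
    · show -(π g) = 0 - π g; abel
  · -- Exact (j ∘ k) fD
    intro p
    constructor
    · intro hp
      have : ((p, 0) : (P × L : Type u)) ∈ N := (hmk0 _).mp hp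
      obtain ⟨g, hg⟩ := this
      have h1 : j g = p := congrArg Prod.fst hg
      have h2 : -(π g) = 0 := congrArg Prod.snd hg
      have h3 : π g = 0 := by rwa [neg_eq_zero] at h2
      obtain ⟨x, rfl⟩ := (hkπ g).mp h3
      exact ⟨x, h1⟩
    · rintro ⟨x, rfl⟩
      show mk ((j (k x), 0) : (P × L : Type u)) = 0
      rw [hmk0]
      refine ⟨k x, ?_⟩
      apply Prod.ext
      · rfl
      · show -(π (k x)) = 0
        rw [(hkπ _).mpr ⟨x, rfl⟩, neg_zero]
  · -- μ injective
    apply inj_of_zero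
    intro l hl
    have : ((0, l) : (P × L : Type u)) ∈ N := (hmk0 _).mp hl
    obtain ⟨g, hg⟩ := this
    have h1 : j g = 0 := congrArg Prod.fst hg
    have hg0 : g = 0 := hjinj (by rw [h1, map_zero])
    have h2 : -(π g) = l := congrArg Prod.snd hg
    rw [hg0, map_zero, neg_zero] at h2
    exact h2.symm
  · -- tD surjective
    intro h
    obtain ⟨p, rfl⟩ := hrsurj h
    exact ⟨mk ((p, 0) : (P × L : Type u)), htDmk _⟩
  · -- Exact μ tD
    intro w
    obtain ⟨⟨p, l⟩, rfl⟩ := Submodule.mkQ_surjective N w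
    constructor
    · intro hw
      have hw' : r p = 0 := (htDmk ((p, l) : (P × L : Type u))).symm.trans hw
      obtain ⟨g, rfl⟩ := (hjr p).mp hw'
      refine ⟨l + π g, ?_⟩
      show mk ((0, l + π g) : (P × L : Type u)) = mk ((j g, l) : (P × L : Type u))
      rw [← sub_eq_zero, ← map_sub, hmk0]
      refine ⟨-g, ?_⟩
      apply Prod.ext
      · show j (-g) = 0 - j g; rw [map_neg]; abel
      · show -(π (-g)) = l + π g - l; rw [map_neg, neg_neg]; abel
    · rintro ⟨l', hl'⟩
      rw [← hl']
      show tD (mk ((0, l') : (P × L : Type u))) = 0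
      rw [htDmk, map_zero]

/-- Pushout of two monos with given cokernels, producing the glued extension. -/
lemma pushout_glue (h𝒳' : ∀ P : ModuleCat.{u} R, Module.Projective R P → 𝒳 P)
    {L G0 D H M : ModuleCat.{u} R}
    (a : L →ₗ[R] G0) (q : G0 →ₗ[R] M) (b : L →ₗ[R] D) (t : D →ₗ[R] H)
    (hainj : Function.Injective a) (hqsurj : Function.Surjective q)
    (hexaq : Function.Exact a q)
    (hbinj : Function.Injective b) (htsurj : Function.Surjective t)
    (hexbt : Function.Exact b t)
    (hG0 : XGorensteinProjective R 𝒳 G0) (hH : XGorensteinProjective R 𝒳 H) :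
    ∃ (E : ModuleCat.{u} R) (iD : D →ₗ[R] E) (e : E →ₗ[R] M),
      Function.Injective iD ∧ Function.Surjective e ∧ Function.Exact iD e ∧
      XGorensteinProjective R 𝒳 E := by
  classical
  set N : Submodule R ((G0 × D : Type u)) := LinearMap.range (a.prod (-b)) with hN
  set mk : ((G0 × D : Type u)) →ₗ[R] (((G0 × D : Type u)) ⧸ N) := N.mkQ with hmk
  have hmk0 : ∀ x : (G0 × D : Type u), mk x = 0 ↔ x ∈ N := fun x => Submodule.Quotient.mk_eq_zero N
  set iG : G0 →ₗ[R] (((G0 × D : Type u)) ⧸ N) := mk ∘ₗ LinearMap.inl R (G0 : Type u) (D : Type u) with hiG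
  set iD : D →ₗ[R] (((G0 × D : Type u)) ⧸ N) := mk ∘ₗ LinearMap.inr R (G0 : Type u) (D : Type u) with hiD
  have hkerM : N ≤ LinearMap.ker (q ∘ₗ LinearMap.fst R (G0 : Type u) (D : Type u)) := by
    rintro x ⟨l, rfl⟩
    show q (a l) = 0
    exact (hexaq _).mpr ⟨l, rfl⟩
  set e : (((G0 × D : Type u)) ⧸ N) →ₗ[R] M := N.liftQ _ hkerM with he
  have hemk : ∀ x : (G0 × D : Type u), e (mk x) = q x.1 := fun x => rfl
  have hkerH : N ≤ LinearMap.ker (t ∘ₗ LinearMap.snd R (G0 : Type u) (D : Type u)) := by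
    rintro x ⟨l, rfl⟩
    show t (-(b l)) = 0
    rw [map_neg, (hexbt _).mpr ⟨l, rfl⟩, neg_zero]
  set eH : (((G0 × D : Type u)) ⧸ N) →ₗ[R] H := N.liftQ _ hkerH with heH
  have heHmk : ∀ x : (G0 × D : Type u), eH (mk x) = t x.2 := fun x => rfl
  have hiDinj : Function.Injective iD := by
    apply inj_of_zero
    intro d hd
    obtain ⟨l, hl⟩ := (hmk0 _).mp hd
    have h1 : a l = 0 := congrArg Prod.fst hl
    have hl0 : l = 0 := hainj (by rw [h1, map_zero])
    have h2 : -(b l) = d := congrArg Prod.snd hl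
    rw [hl0, map_zero, neg_zero] at h2
    exact h2.symm
  have hiGinj : Function.Injective iG := by
    apply inj_of_zero
    intro g hg
    obtain ⟨l, hl⟩ := (hmk0 _).mp hg
    have h2 : -(b l) = 0 := congrArg Prod.snd hl
    have hl0 : l = 0 := hbinj (by rw [← neg_neg (b l), h2, neg_zero, map_zero])
    have h1 : a l = g := congrArg Prod.fst hl
    rw [hl0, map_zero] at h1
    exact h1.symm
  have heHsurj : Function.Surjective eH := by
    intro h
    obtain ⟨d, rfl⟩ := htsurj h
    exact ⟨mk ((0, d) : (G0 × D : Type u)), heHmk _⟩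
  have hexGH : Function.Exact iG eH := by
    intro w
    obtain ⟨⟨g, d⟩, rfl⟩ := Submodule.mkQ_surjective N w
    constructor
    · intro hw
      have hw' : t d = 0 := (heHmk ((g, d) : (G0 × D : Type u))).symm.trans hw
      obtain ⟨l, rfl⟩ := (hexbt d).mp hw'
      refine ⟨g + a l, ?_⟩
      show mk ((g + a l, 0) : (G0 × D : Type u)) = mk ((g, b l) : (G0 × D : Type u))
      rw [← sub_eq_zero, ← map_sub, hmk0]
      refine ⟨l, ?_⟩
      apply Prod.ext
      · show a l = g + a l - g; abel
      · show -(b l) = 0 - b l; abel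
    · rintro ⟨g', hg'⟩
      rw [← hg']
      show eH (mk ((g', 0) : (G0 × D : Type u))) = 0
      rw [heHmk, map_zero]
  refine ⟨ModuleCat.of R (((G0 × D : Type u)) ⧸ N), iD, e, hiDinj, ?_, ?_, ?_⟩
  · -- e surjective
    intro m
    obtain ⟨g, rfl⟩ := hqsurj m
    exact ⟨mk ((g, 0) : (G0 × D : Type u)), hemk _⟩
  · -- Exact iD e
    intro w
    obtain ⟨⟨g, d⟩, rfl⟩ := Submodule.mkQ_surjective N w
    constructor
    · intro hw
      have hw' : q g = 0 := (hemk ((g, d) : (G0 × D : Type u))).symm.trans hw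
      obtain ⟨l, rfl⟩ := (hexaq g).mp hw'
      refine ⟨d + b l, ?_⟩
      show mk ((0, d + b l) : (G0 × D : Type u)) = mk ((a l, d) : (G0 × D : Type u))
      rw [← sub_eq_zero, ← map_sub, hmk0]
      refine ⟨-l, ?_⟩
      apply Prod.ext
      · show a (-l) = 0 - a l; rw [map_neg]; abel
      · show -(b (-l)) = d + b l - d; rw [map_neg, neg_neg]; abel
    · rintro ⟨d', hd'⟩
      rw [← hd']
      show e (mk ((0, d') : (G0 × D : Type u))) = 0
      rw [hemk, map_zero]
  · exact xgp_extension h𝒳' iG eH hiGinj heHsurj hexGH hG0 hH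

end Pushouts


/-- An `𝒳`-Gorenstein projective embeds in a projective with
`𝒳`-Gorenstein projective cokernel. -/
lemma xgp_embeds {G : ModuleCat.{u} R} (hG : XGorensteinProjective R 𝒳 G) :
    ∃ (P H : ModuleCat.{u} R) (j : G →ₗ[R] P) (r : P →ₗ[R] H),
      Module.Projective R P ∧ Function.Injective j ∧ Function.Surjective r ∧
      Function.Exact j r ∧ XGorensteinProjective R 𝒳 H := by
  obtain ⟨C, ⟨e⟩⟩ := hG
  refine ⟨C.P 0, ModuleCat.of R ↥(LinearMap.ker (C.d (0 + 1))),
    (LinearMap.ker (C.d 0)).subtype ∘ₗ (e : G →ₗ[R] ↥(LinearMap.ker (C.d 0))),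
    (C.d 0).codRestrict _ (fun x => (C.exact 0 _).mpr ⟨x, rfl⟩), ?_, ?_, ?_, ?_, ?_⟩
  · exact C.projective 0
  · exact (Submodule.injective_subtype _).comp e.injective
  · intro z
    obtain ⟨x, hx⟩ := (C.exact 0 z.1).mp z.2
    exact ⟨x, Subtype.ext hx⟩
  · intro x
    constructor
    · intro hx
      have hx0 : C.d 0 x = 0 := congrArg Subtype.val hx
      have : x ∈ LinearMap.ker (C.d 0) := hx0
      exact ⟨e.symm ⟨x, this⟩, by simp⟩
    · rintro ⟨a, rfl⟩
      exact Subtype.ext (by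
        show C.d 0 ((LinearMap.ker (C.d 0)).subtype (e a)) = 0
        exact (e a).2)
  · exact ⟨⟨fun n => C.P (n + 1), fun n => C.d (n + 1), fun n => C.projective (n + 1),
      fun n => C.exact (n + 1), fun Y hY n => C.homExact Y hY (n + 1)⟩,
      ⟨LinearEquiv.refl R _⟩⟩


section Main

lemma rwk_mono {𝒞 𝒞' : ModuleCat.{u} R → Prop} (h : ∀ X, 𝒞 X → 𝒞' X) :
    ∀ (m : ℕ) (K M : ModuleCat.{u} R), ResWithKernel R 𝒞 m K M → ResWithKernel R 𝒞' m K M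
  | 0, K, M, hres => hres
  | (m+1), K, M, hres => by
    obtain ⟨G, L, f, g, hG, hf, hg, hfg, hres'⟩ := hres
    exact ⟨G, L, f, g, h G hG, hf, hg, hfg, rwk_mono h m K L hres'⟩

/-- The main construction: from a Gorenstein resolution of length `n ≥ 1` we get
a short exact sequence `0 → K → G → M → 0` with `G` Gorenstein projective and
`K` of projective dimension at most `n - 1` (witnessed by a resolution). -/
lemma main_construction (h𝒳' : ∀ P : ModuleCat.{u} R, Module.Projective R P → 𝒳 P) :
    ∀ (n : ℕ), 1 ≤ n → ∀ (M Kg : ModuleCat.{u} R),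
    XGorensteinProjective R 𝒳 Kg →
    ResWithKernel R (XGorensteinProjective R 𝒳) n Kg M →
    ∃ (K G : ModuleCat.{u} R) (f : K →ₗ[R] G) (g : G →ₗ[R] M),
      Function.Injective f ∧ Function.Surjective g ∧ Function.Exact f g ∧
      XGorensteinProjective R 𝒳 G ∧
      ∃ Q : ModuleCat.{u} R, Module.Projective R Q ∧
        ResWithKernel R (fun N => Module.Projective R N) (n - 1) Q K := by
  intro n
  induction n with
  | zero => omega
  | succ m IH =>
    intro _ M Kg hKg hres
    obtain ⟨G0, L, fL, gM, hG0, hfinj, hgsurj, hfg, hres'⟩ := hres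
    cases m with
    | zero =>
      -- base case : `L ≅ Kg` is Gorenstein projective
      obtain ⟨eL⟩ := hres'
      have hL : XGorensteinProjective R 𝒳 L := xgp_of_equiv eL hKg
      obtain ⟨P, H, jL, rH, hPproj, hjinj, hrsurj, hjr, hH⟩ := xgp_embeds hL
      obtain ⟨E, iD, e, hiDinj, hesurj, hexDE, hE⟩ :=
        pushout_glue h𝒳' fL gM jL rH hfinj hgsurj hfg hjinj hrsurj hjr hG0 hH
      exact ⟨P, E, iD, e, hiDinj, hesurj, hexDE, hE, P, hPproj, ⟨LinearEquiv.refl R P⟩⟩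
    | succ m' =>
      obtain ⟨K', G', k, π, hkinj, hπsurj, hkπ, hG', Q, hQproj, hQres⟩ :=
        IH (by omega) L Kg hKg hres'
      obtain ⟨P, H, j, r, hPproj, hjinj, hrsurj, hjr, hH⟩ := xgp_embeds hG'
      obtain ⟨D, fD, μ, tD, hfDsurj, hexkfD, hμinj, htDsurj, hexμtD⟩ :=
        pushout_mono_epi k π j r hkinj hπsurj hkπ hjinj hrsurj hjr
      obtain ⟨E, iD, e, hiDinj, hesurj, hexDE, hE⟩ :=
        pushout_glue h𝒳' fL gM μ tD hfinj hgsurj hfg hμinj htDsurj hexμtD hG0 hH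
      refine ⟨D, E, iD, e, hiDinj, hesurj, hexDE, hE, Q, hQproj, ?_⟩
      exact ⟨P, K', j ∘ₗ k, fD, hPproj, hjinj.comp hkinj, hfDsurj, hexkfD, hQres⟩

lemma mem_of_sInf_eq_coe {S : Set ℕ∞} {n : ℕ} (h : sInf S = (n : ℕ∞)) : (n : ℕ∞) ∈ S := by
  by_contra hn
  have hlb : ∀ s ∈ S, ((n + 1 : ℕ) : ℕ∞) ≤ s := by
    intro s hs
    have h1 : (n : ℕ∞) ≤ s := h ▸ sInf_le hs
    have h2 : (n : ℕ∞) ≠ s := fun e => hn (e ▸ hs)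
    have h3 : (n : ℕ∞) < s := lt_of_le_of_ne h1 h2
    exact Order.add_one_le_of_lt h3
  have : ((n + 1 : ℕ) : ℕ∞) ≤ (n : ℕ∞) := h ▸ le_sInf hlb
  have : (n + 1 : ℕ) ≤ n := Nat.cast_le.mp this
  omega

end Main

end GpdAux

/-- If `𝒳-Gpd(M) = n` with `1 ≤ n < ∞`, then there is a short exact sequence
`0 → K → G → M → 0` with `G` `𝒳`-Gorenstein projective and `pd(K) = n - 1`. -/
theorem exists_shortExact_of_xGpd_eq
    (R : Type u) [Ring R] (𝒳 : ModuleCat.{u} R → Prop)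
    (h𝒳 : ∀ P : ModuleCat.{u} R, Module.Projective R P → 𝒳 P)
    (M : ModuleCat.{u} R) (n : ℕ) (hn : 1 ≤ n)
    (hM : xGpd R 𝒳 M = (n : ℕ∞)) :
    ∃ (K G : ModuleCat.{u} R) (f : K →ₗ[R] G) (g : G →ₗ[R] M),
      Function.Injective f ∧ Function.Surjective g ∧ Function.Exact f g ∧
      XGorensteinProjective R 𝒳 G ∧ pdim R K = ((n - 1 : ℕ) : ℕ∞) := by
  classical
  rw [xGpd, relDim] at hM
  obtain ⟨m, hm, Kg, hKg, hres⟩ := GpdAux.mem_of_sInf_eq_coe hM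
  have hnm : n = m := Nat.cast_injective hm
  subst hnm
  obtain ⟨K, G, f, g, hfinj, hgsurj, hfg, hG, Q, hQproj, hQres⟩ :=
    GpdAux.main_construction h𝒳 n hn M Kg hKg hres
  refine ⟨K, G, f, g, hfinj, hgsurj, hfg, hG, ?_⟩
  rw [pdim, relDim]
  apply le_antisymm
  · exact sInf_le ⟨n - 1, rfl, Q, hQproj, hQres⟩
  · apply le_sInf
    rintro s ⟨m', rfl, Kw, hKwproj, hKwres⟩
    have hKwXGP : XGorensteinProjective R 𝒳 Kw := GpdAux.xgp_of_projective Kw hKwproj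
    have hresM : ResWithKernel R (XGorensteinProjective R 𝒳) (m' + 1) Kw M :=
      ⟨G, K, f, g, hG, hfinj, hgsurj, hfg,
        GpdAux.rwk_mono (fun X hX => GpdAux.xgp_of_projective X hX) m' Kw K hKwres⟩
    have hmemS : ((m' + 1 : ℕ) : ℕ∞) ∈ {n' : ℕ∞ | ∃ m : ℕ, n' = m ∧
        ∃ K, XGorensteinProjective R 𝒳 K ∧
          ResWithKernel R (XGorensteinProjective R 𝒳) m K M} :=
      ⟨m' + 1, rfl, Kw, hKwXGP, hresM⟩
    have h1 : ((n : ℕ) : ℕ∞) ≤ ((m' + 1 : ℕ) : ℕ∞) := hM ▸ sInf_le hmemS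
    have h2 : n ≤ m' + 1 := Nat.cast_le.mp h1
    exact_mod_cast (by omega : n - 1 ≤ m')
end
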